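/- arXiv:math/0701755 — 5 statements merged into one kernel-verified Lean document; each statement's English description precedes it below -/
import Mathlib

section
/- For any partition λ, the number of partitions μ differing from λ by a square equals 2·ℓ̄(λ) + 1, where ℓ̄(λ) is the number of distinct (nonzero) parts of λ. -/
structure Ptn where
  parts : ℕ → ℕ
  antitone : ∀ m n : ℕ, m ≤ n → parts n ≤ parts m
  finite : ∃ N : ℕ, ∀ n : ℕ, N ≤ n → parts n = 0

namespace Ptn

/-- 1-indexed Young diagram of a partition. -/
def ycells (l : Ptn) : Set (ℕ × ℕ) :=
  {p | 1 ≤ p.1 ∧ 1 ≤ p.2 ∧ p.2 ≤ l.parts (p.1 - 1)}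

/-- number of cells, `|λ|`. -/
noncomputable def size (l : Ptn) : ℕ := l.ycells.ncard

/-- number of nonzero parts, `ℓ(λ)`. -/
noncomputable def length (l : Ptn) : ℕ := {i : ℕ | l.parts i ≠ 0}.ncard

/-- `λ` and `μ` differ by a square. -/
def Differs (l m : Ptn) : Prop :=
  ∃ i : ℕ, (l.parts i = m.parts i + 1 ∨ m.parts i = l.parts i + 1) ∧
    ∀ k : ℕ, k ≠ i → l.parts k = m.parts k

/-- `λ` and `μ` differ by a square whose content is `d`. -/
def DiffersAt (l m : Ptn) (d : ℤ) : Prop :=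
  ∃ i : ℕ, (l.parts i = m.parts i + 1 ∨ m.parts i = l.parts i + 1) ∧
    (∀ k : ℕ, k ≠ i → l.parts k = m.parts k) ∧
    (max (l.parts i) (m.parts i) : ℤ) - 1 - (i : ℤ) = d

/-- `ρ_d(λ)`: number of cells of content `d`. -/
noncomputable def rho (l : Ptn) (d : ℤ) : ℕ :=
  {p ∈ l.ycells | (p.2 : ℤ) - (p.1 : ℤ) = d}.ncard

/-- rank: number of diagonal cells. -/
noncomputable def rank (l : Ptn) : ℕ := {i : ℕ | i < l.parts i}.ncard

/-- conjugate partition parts (0-indexed). -/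
noncomputable def conj (l : Ptn) (k : ℕ) : ℕ := {i : ℕ | k < l.parts i}.ncard

end Ptn

/-- `R_d(T)`: number of points of `T` of content `d`. -/
noncomputable def Rd (T : Set (ℕ × ℕ)) (d : ℤ) : ℕ :=
  {p ∈ T | (p.2 : ℤ) - (p.1 : ℤ) = d}.ncard

/-- `c` is the `(a,b)`-complement of `l`. -/
def IsComplementOf (a b : ℕ) (c l : Ptn) : Prop :=
  ∀ k : ℕ, c.parts k = if k < a then b - l.parts (a - 1 - k) else 0

section Aux

open Classical in
/-- parts of `λ` with 1 added at `i` (when legal). -/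
noncomputable def upParts (l : Ptn) (i j : ℕ) : ℕ :=
  if j = i ∧ (i = 0 ∨ l.parts i < l.parts (i-1)) then l.parts i + 1 else l.parts j

open Classical in
/-- parts of `λ` with 1 removed at `i` (when legal). -/
noncomputable def downParts (l : Ptn) (i j : ℕ) : ℕ :=
  if j = i ∧ l.parts (i+1) < l.parts i then l.parts i - 1 else l.parts j

lemma upParts_ne (l : Ptn) (i j : ℕ) (h : j ≠ i) : upParts l i j = l.parts j := by
  rw [upParts, if_neg (by tauto)]

lemma upParts_self (l : Ptn) (i : ℕ) (h : i = 0 ∨ l.parts i < l.parts (i-1)) :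
    upParts l i i = l.parts i + 1 := by
  rw [upParts, if_pos ⟨rfl, h⟩]

lemma downParts_ne (l : Ptn) (i j : ℕ) (h : j ≠ i) : downParts l i j = l.parts j := by
  rw [downParts, if_neg (by tauto)]

lemma downParts_self (l : Ptn) (i : ℕ) (h : l.parts (i+1) < l.parts i) :
    downParts l i i = l.parts i - 1 := by
  rw [downParts, if_pos ⟨rfl, h⟩]

noncomputable def upPtn (l : Ptn) (i : ℕ) : Ptn where
  parts := upParts l i
  antitone := by
    have step : ∀ k, upParts l i (k+1) ≤ upParts l i k := by
      intro k
      by_cases hg : i = 0 ∨ l.parts i < l.parts (i-1)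
      · by_cases h1 : k + 1 = i
        · rw [upParts_ne l i k (by omega), h1, upParts_self l i hg]
          rcases hg with h0 | hlt
          · omega
          · have hik : i - 1 = k := by omega
            rw [← hik]
            omega
        · by_cases h2 : k = i
          · have := l.antitone i (i+1) (by omega)
            rw [upParts_ne l i (k+1) h1, h2, upParts_self l i hg]
            subst h2
            omega
          · rw [upParts_ne l i (k+1) h1, upParts_ne l i k h2]
            exact l.antitone k (k+1) (by omega)
      · have hne : ∀ j, upParts l i j = l.parts j := fun j => by
          rw [upParts, if_neg (by tauto)]
        rw [hne, hne]
        exact l.antitone k (k+1) (by omega)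
    exact fun m n h => antitone_nat_of_succ_le step h
  finite := by
    obtain ⟨N, hN⟩ := l.finite
    refine ⟨max N (i+1), fun n hn => ?_⟩
    rw [upParts_ne l i n (by omega)]
    exact hN n (by omega)

noncomputable def downPtn (l : Ptn) (i : ℕ) : Ptn where
  parts := downParts l i
  antitone := by
    have step : ∀ k, downParts l i (k+1) ≤ downParts l i k := by
      intro k
      by_cases hg : l.parts (i+1) < l.parts i
      · by_cases h1 : k + 1 = i
        · rw [downParts_ne l i k (by omega), h1, downParts_self l i hg]
          have := l.antitone k i (by omega)
          omega
        · by_cases h2 : k = i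
          · rw [downParts_ne l i (k+1) h1, h2, downParts_self l i hg]
            subst h2
            omega
          · rw [downParts_ne l i (k+1) h1, downParts_ne l i k h2]
            exact l.antitone k (k+1) (by omega)
      · have hne : ∀ j, downParts l i j = l.parts j := fun j => by
          rw [downParts, if_neg (by tauto)]
        rw [hne, hne]
        exact l.antitone k (k+1) (by omega)
    exact fun m n h => antitone_nat_of_succ_le step h
  finite := by
    obtain ⟨N, hN⟩ := l.finite
    refine ⟨max N (i+1), fun n hn => ?_⟩
    rw [downParts_ne l i n (by omega)]
    exact hN n (by omega)

lemma Ptn.ext' {p q : Ptn} (h : p.parts = q.parts) : p = q := by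
  cases p; cases q; cases h; rfl

lemma upPtn_parts_ne (l : Ptn) (i j : ℕ) (h : j ≠ i) : (upPtn l i).parts j = l.parts j :=
  upParts_ne l i j h

lemma upPtn_parts_self (l : Ptn) (i : ℕ) (h : i = 0 ∨ l.parts i < l.parts (i-1)) :
    (upPtn l i).parts i = l.parts i + 1 :=
  upParts_self l i h

lemma downPtn_parts_ne (l : Ptn) (i j : ℕ) (h : j ≠ i) : (downPtn l i).parts j = l.parts j :=
  downParts_ne l i j h

lemma downPtn_parts_self (l : Ptn) (i : ℕ) (h : l.parts (i+1) < l.parts i) :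
    (downPtn l i).parts i = l.parts i - 1 :=
  downParts_self l i h

end Aux

/-- The number of partitions differing from `λ` by a square is `2ℓ̄(λ) + 1`, where
`ℓ̄(λ)` is the number of distinct nonzero parts of `λ`. -/
theorem statement5 (l : Ptn) :
    {m : Ptn | l.Differs m}.ncard
      = 2 * {v : ℕ | v ≠ 0 ∧ ∃ i : ℕ, l.parts i = v}.ncard + 1 := by
  classical
  obtain ⟨N, hN⟩ := l.finite
  set A : Set ℕ := {i | i = 0 ∨ l.parts i < l.parts (i-1)} with hA
  set B : Set ℕ := {i | l.parts (i+1) < l.parts i} with hB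
  set V : Set ℕ := {v : ℕ | v ≠ 0 ∧ ∃ i : ℕ, l.parts i = v} with hV
  have hBfin : B.Finite := by
    refine Set.Finite.subset (Set.finite_Iio N) (fun i hi => ?_)
    simp only [hB, Set.mem_setOf_eq] at hi
    simp only [Set.mem_Iio]
    by_contra hcon
    have := hN i (by omega)
    omega
  have hAeq : A = insert 0 ((· + 1) '' B) := by
    ext i
    simp only [hA, hB, Set.mem_setOf_eq, Set.mem_insert_iff, Set.mem_image]
    constructor
    · rintro (h0 | hlt)
      · exact Or.inl h0
      · rcases Nat.eq_zero_or_pos i with h0 | hpos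
        · exact Or.inl h0
        · refine Or.inr ⟨i - 1, ?_, by omega⟩
          have : i - 1 + 1 = i := by omega
          rw [this]; exact hlt
    · rintro (h0 | ⟨j, hj, rfl⟩)
      · exact Or.inl h0
      · right
        simpa using hj
  have hAfin : A.Finite := by
    rw [hAeq]; exact (hBfin.image _).insert 0
  -- parts is injective on B with image V
  have hinjB : Set.InjOn l.parts B := by
    intro i hi j hj hij
    by_contra hne
    rcases Nat.lt_or_ge i j with h | h
    · have h1 := l.antitone (i+1) j (by omega)
      simp only [hB, Set.mem_setOf_eq] at hi
      omega
    · have h' : j < i := by omega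
      have h1 := l.antitone (j+1) i (by omega)
      simp only [hB, Set.mem_setOf_eq] at hj
      omega
  have himg : l.parts '' B = V := by
    ext v
    simp only [hB, hV, Set.mem_image, Set.mem_setOf_eq]
    constructor
    · rintro ⟨i, hi, rfl⟩
      exact ⟨by omega, i, rfl⟩
    · rintro ⟨hv, i, hi⟩
      -- take the largest j with parts j = v
      have hSfin : {j : ℕ | l.parts j = v}.Finite := by
        refine Set.Finite.subset (Set.finite_Iio N) (fun j hj => ?_)
        simp only [Set.mem_setOf_eq] at hj
        by_contra hcon
        have := hN j (by simp only [Set.mem_Iio] at hcon; omega)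
        omega
      obtain ⟨j, hjmem, hjmax⟩ := Set.Finite.exists_maximalFor id _ hSfin ⟨i, hi⟩
      simp only [Set.mem_setOf_eq, id] at hjmem hjmax
      refine ⟨j, ?_, hjmem⟩
      have h1 := l.antitone j (j+1) (by omega)
      have h2 : l.parts (j+1) ≠ v := fun hc => by have := hjmax hc (by omega); omega
      omega
  have hBV : B.ncard = V.ncard := by
    rw [← himg, Set.ncard_image_of_injOn hinjB]
  -- the set of partitions differing from l
  have hset : {m : Ptn | l.Differs m} = (upPtn l '' A) ∪ (downPtn l '' B) := by
    ext m
    simp only [Set.mem_setOf_eq, Set.mem_union, Set.mem_image]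
    constructor
    · rintro ⟨i, hor | hor, heq⟩
      · -- removal : m = downPtn l i
        right
        have hiB : i ∈ B := by
          have h1 := m.antitone i (i+1) (by omega)
          have h2 := heq (i+1) (by omega)
          simp only [hB, Set.mem_setOf_eq]
          omega
        refine ⟨i, hiB, ?_⟩
        refine (Ptn.ext' (funext fun j => ?_)).symm
        by_cases hj : j = i
        · subst hj
          rw [downPtn_parts_self l j (by simpa [hB] using hiB)]
          omega
        · rw [downPtn_parts_ne l i j hj, heq j hj]
      · -- addition : m = upPtn l i
        left
        have hiA : i ∈ A := by
          simp only [hA, Set.mem_setOf_eq]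
          rcases Nat.eq_zero_or_pos i with h0 | hpos
          · exact Or.inl h0
          · right
            have h1 := m.antitone (i-1) i (by omega)
            have h2 := heq (i-1) (by omega)
            omega
        refine ⟨i, hiA, ?_⟩
        refine (Ptn.ext' (funext fun j => ?_)).symm
        by_cases hj : j = i
        · subst hj
          rw [upPtn_parts_self l j (by simpa [hA] using hiA)]
          omega
        · rw [upPtn_parts_ne l i j hj, heq j hj]
    · rintro (⟨i, hi, rfl⟩ | ⟨i, hi, rfl⟩)
      · refine ⟨i, Or.inr ?_, fun k hk => (upPtn_parts_ne l i k hk).symm⟩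
        rw [upPtn_parts_self l i (by simpa [hA] using hi)]
      · simp only [hB, Set.mem_setOf_eq] at hi
        refine ⟨i, Or.inl ?_, fun k hk => (downPtn_parts_ne l i k hk).symm⟩
        rw [downPtn_parts_self l i hi]
        omega
  have hupinj : Set.InjOn (upPtn l) A := by
    intro i hi j hj hij
    by_contra hne
    have h1 := upPtn_parts_self l i (by simpa [hA] using hi)
    have h2 := upPtn_parts_ne l j i (hne)
    rw [hij] at h1
    omega
  have hdninj : Set.InjOn (downPtn l) B := by
    intro i hi j hj hij
    by_contra hne
    simp only [hB, Set.mem_setOf_eq] at hi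
    have h1 := downPtn_parts_self l i hi
    have h2 := downPtn_parts_ne l j i hne
    rw [hij] at h1
    have h3 := l.antitone i (i+1) (by omega)
    omega
  have hdisj : Disjoint (upPtn l '' A) (downPtn l '' B) := by
    rw [Set.disjoint_left]
    rintro m ⟨i, hi, rfl⟩ ⟨j, hj, hji⟩
    simp only [hB, Set.mem_setOf_eq] at hj
    have h1 := downPtn_parts_self l j hj
    rw [hji] at h1
    by_cases hij : j = i
    · subst hij
      have h2 := upPtn_parts_self l j (by simpa [hA] using hi)
      omega
    · have h2 := upPtn_parts_ne l i j hij
      omega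
  have hsucc_inj : Set.InjOn (· + 1) B := fun a _ b _ h => by simpa using h
  have h0nmem : (0 : ℕ) ∉ (· + 1) '' B := by
    simp [Set.mem_image]
  rw [hset, Set.ncard_union_eq hdisj (hAfin.image _) (hBfin.image _),
      Set.ncard_image_of_injOn hupinj, Set.ncard_image_of_injOn hdninj,
      hAeq, Set.ncard_insert_of_notMem h0nmem (hBfin.image _),
      Set.ncard_image_of_injOn hsucc_inj, hBV]
  ring
end

section
/- An integer d is a change diagonal of a partition λ (i.e., there exists a partition μ ~ λ with Δ(λ,μ) = d) if and only if the pair (ρ_d(λ) − ρ_{d−1}(λ), ρ_{d+1}(λ) − ρ_d(λ)) equals (1,0) or (0,1) when d < 0, equals (1,−1) or (0,0) when d = 0, and equals (0,−1) or (−1,0) when d > 0. -/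
namespace Ptn

-- helpers
noncomputable def v (l : Ptn) (r : ℕ) : ℤ := (l.parts r : ℤ) - r

lemma v_anti (l : Ptn) : StrictAnti l.v := by
  intro m n h
  have h1 : l.parts n ≤ l.parts m := l.antitone m n h.le
  simp only [v]
  omega

def Aset (l : Ptn) (c : ℤ) : Set ℕ := {r | c ≤ l.v r}

lemma Aset_finite (l : Ptn) (c : ℤ) : (l.Aset c).Finite := by
  obtain ⟨N, hN⟩ := l.finite
  apply Set.Finite.subset (Set.finite_Iio (N + (-c).toNat + 1))
  intro r hr
  simp only [Aset, Set.mem_setOf_eq, v] at hr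
  simp only [Set.mem_Iio]
  by_contra h
  push_neg at h
  rw [hN r (by omega)] at hr
  omega

noncomputable def ac (l : Ptn) (c : ℤ) : ℕ := (l.Aset c).ncard

open Classical in
lemma ac_step (l : Ptn) (c : ℤ) :
    l.ac c = l.ac (c + 1) + (if ∃ r, l.v r = c then 1 else 0) := by
  have hu : l.Aset c = l.Aset (c + 1) ∪ {r | l.v r = c} := by
    ext r; simp only [Aset, Set.mem_setOf_eq, Set.mem_union]; omega
  have hd : Disjoint (l.Aset (c + 1)) {r | l.v r = c} := by
    rw [Set.disjoint_left]; intro r h1 h2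
    simp only [Aset, Set.mem_setOf_eq] at h1 h2; omega
  have hf2 : {r | l.v r = c}.Finite :=
    (l.Aset_finite c).subset (fun r hr => le_of_eq hr.symm)
  rw [ac, ac, hu, Set.ncard_union_eq hd (l.Aset_finite (c + 1)) hf2]
  congr 1
  split_ifs with h
  · obtain ⟨r0, hr0⟩ := h
    have he : {r | l.v r = c} = {r0} := by
      ext r; simp only [Set.mem_setOf_eq, Set.mem_singleton_iff]
      exact ⟨fun h => l.v_anti.injective (h.trans hr0.symm), fun h => h ▸ hr0⟩
    rw [he, Set.ncard_singleton]
  · have he : {r | l.v r = c} = ∅ := by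
      ext r; simp only [Set.mem_setOf_eq, Set.mem_empty_iff_false, iff_false]
      exact fun hr => h ⟨r, hr⟩
    rw [he, Set.ncard_empty]

lemma rho_eq (l : Ptn) (d : ℤ) :
    l.rho d = {r : ℕ | d + 1 ≤ l.v r ∧ -d ≤ (r : ℤ)}.ncard := by
  rw [rho]
  have himg : {p ∈ l.ycells | (p.2 : ℤ) - (p.1 : ℤ) = d}
      = (fun r : ℕ => (r + 1, ((r : ℤ) + 1 + d).toNat)) ''
        {r : ℕ | d + 1 ≤ l.v r ∧ -d ≤ (r : ℤ)} := by
    ext ⟨i, j⟩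
    simp only [Set.mem_setOf_eq, Set.mem_image, ycells, v, Prod.mk.injEq]
    constructor
    · rintro ⟨⟨h1, h2, h3⟩, h4⟩
      refine ⟨i - 1, ⟨?_, ?_⟩, ?_, ?_⟩ <;> omega
    · rintro ⟨r, ⟨hr1, hr2⟩, hi, hj⟩
      subst hi
      simp only [Nat.add_sub_cancel] at *
      refine ⟨⟨by omega, by omega, by omega⟩, by omega⟩
  rw [himg, Set.ncard_image_of_injOn]
  intro r _ s _ h
  have := congrArg Prod.fst h
  simpa using this

lemma rho_nonneg_d (l : Ptn) (d : ℤ) (hd : 0 ≤ d) : l.rho d = l.ac (d + 1) := by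
  rw [rho_eq, ac]
  congr 1
  ext r
  simp only [Aset, Set.mem_setOf_eq]
  exact ⟨fun h => h.1, fun h => ⟨h, by omega⟩⟩

lemma rho_nonpos_d (l : Ptn) (d : ℤ) (hd : d ≤ 0) :
    (l.rho d : ℤ) = (l.ac (d + 1) : ℤ) + d := by
  have key : {r : ℕ | d + 1 ≤ l.v r ∧ -d ≤ (r : ℤ)}
      = l.Aset (d + 1) \ Set.Iio (-d).toNat := by
    ext r
    simp only [Aset, Set.mem_setOf_eq, Set.mem_diff, Set.mem_Iio, not_lt]
    constructor
    · rintro ⟨h1, h2⟩; exact ⟨h1, by omega⟩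
    · rintro ⟨h1, h2⟩; exact ⟨h1, by omega⟩
  have hsub : Set.Iio ((-d).toNat) ⊆ l.Aset (d + 1) := by
    intro r hr
    simp only [Set.mem_Iio] at hr
    simp only [Aset, Set.mem_setOf_eq, v]
    omega
  have hle : (Set.Iio ((-d).toNat)).ncard ≤ (l.Aset (d + 1)).ncard :=
    Set.ncard_le_ncard hsub (l.Aset_finite _)
  have hio : (Set.Iio ((-d).toNat)).ncard = (-d).toNat := by
    rw [← Finset.coe_Iio, Set.ncard_coe_finset, Nat.card_Iio]
  rw [rho_eq, key, Set.ncard_diff hsub ((l.Aset_finite _).subset hsub)]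
  rw [hio] at hle ⊢
  rw [ac] at *
  omega

lemma exists_differsAt_iff (l : Ptn) (d : ℤ) :
    (∃ m : Ptn, l.DiffersAt m d) ↔
      (((∃ r, l.v r = d) ∧ ¬(∃ r, l.v r = d + 1)) ∨
       ((∃ r, l.v r = d + 1) ∧ ¬(∃ r, l.v r = d))) := by
  constructor
  · rintro ⟨m, i, hi, hk, hmax⟩
    rcases hi with hi | hi
    · -- removal: l bigger at row i
      have hvi : l.v i = d + 1 := by simp only [v]; omega
      refine Or.inr ⟨⟨i, hvi⟩, ?_⟩
      rintro ⟨j, hj⟩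
      have h1 : l.parts (i + 1) = m.parts (i + 1) := hk (i + 1) (by omega)
      have h2 : m.parts (i + 1) ≤ m.parts i := m.antitone i (i + 1) (by omega)
      have hvs : l.v (i + 1) ≤ d - 1 := by simp only [v]; omega
      have hj1 : i < j := l.v_anti.lt_iff_gt.mp (by omega)
      have hj2 : j < i + 1 := l.v_anti.lt_iff_gt.mp (by omega)
      omega
    · -- addition: m bigger at row i
      have hvi : l.v i = d := by simp only [v]; omega
      refine Or.inl ⟨⟨i, hvi⟩, ?_⟩
      rintro ⟨j, hj⟩
      have hji : j < i := l.v_anti.lt_iff_gt.mp (by omega)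
      -- so i ≥ 1
      have h1 : l.parts (i - 1) = m.parts (i - 1) := hk (i - 1) (by omega)
      have h2 : m.parts i ≤ m.parts (i - 1) := m.antitone (i - 1) i (by omega)
      have hvprev : d + 2 ≤ l.v (i - 1) := by
        simp only [v]; omega
      have hji2 : i - 1 < j := l.v_anti.lt_iff_gt.mp (by omega)
      omega
  · rintro (⟨⟨i, hvi⟩, hq⟩ | ⟨⟨i, hvi⟩, hp⟩)
    · -- add a cell at row i
      simp only [v] at hvi
      have hkey : 1 ≤ i → l.parts i + 1 ≤ l.parts (i - 1) := by
        intro h1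
        by_contra hc
        push_neg at hc
        have h2 : l.parts i ≤ l.parts (i - 1) := l.antitone (i - 1) i (by omega)
        exact hq ⟨i - 1, by simp only [v]; omega⟩
      obtain ⟨N, hN⟩ := l.finite
      set g : ℕ → ℕ := fun k => if k = i then l.parts i + 1 else l.parts k with hg
      have hganti : ∀ a b : ℕ, a ≤ b → g b ≤ g a := by
        intro a b hab
        simp only [hg]
        split_ifs with h1 h2 h2
        · omega
        · -- b = i, a ≠ i, so a < i, a ≤ i - 1
          have h3 : l.parts (i - 1) ≤ l.parts a := l.antitone a (i - 1) (by omega)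
          have := hkey (by omega)
          omega
        · -- a = i, b ≠ i, i < b
          have := l.antitone i b (by omega)
          omega
        · exact l.antitone a b hab
      refine ⟨⟨g, hganti, ⟨max N (i + 1), fun n hn => ?_⟩⟩, i, Or.inr ?_, fun k hk => ?_, ?_⟩
      · simp only [hg]
        rw [if_neg (by omega)]
        exact hN n (by omega)
      · simp only [hg, if_pos rfl]
      · simp only [hg]; rw [if_neg hk]
      · simp only [hg, if_pos rfl]
        omega
    · -- remove a cell at row i
      simp only [v] at hvi
      have hpos : 1 ≤ l.parts i := by
        by_contra hc
        push_neg at hc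
        have := l.antitone i (i + 1) (by omega)
        exact hp ⟨i + 1, by simp only [v]; omega⟩
      have hnext : l.parts (i + 1) < l.parts i := by
        by_contra hc
        push_neg at hc
        have := l.antitone i (i + 1) (by omega)
        exact hp ⟨i + 1, by simp only [v]; omega⟩
      obtain ⟨N, hN⟩ := l.finite
      set g : ℕ → ℕ := fun k => if k = i then l.parts i - 1 else l.parts k with hg
      have hganti : ∀ a b : ℕ, a ≤ b → g b ≤ g a := by
        intro a b hab
        simp only [hg]
        split_ifs with h1 h2 h2
        · omega
        · have := l.antitone a i (by omega)
          omega
        · have := l.antitone (i + 1) b (by omega)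
          omega
        · exact l.antitone a b hab
      refine ⟨⟨g, hganti, ⟨max N (i + 1), fun n hn => ?_⟩⟩, i, Or.inl ?_, fun k hk => ?_, ?_⟩
      · simp only [hg]
        split_ifs with h
        · omega
        · exact hN n (by omega)
      · simp only [hg, if_pos rfl]
        omega
      · simp only [hg]; rw [if_neg hk]
      · simp only [hg, if_pos rfl]
        omega

end Ptn

/-- `d` is a change diagonal of `λ` iff the successive differences of `ρ` around `d`
take the prescribed values. -/
theorem statement9 (l : Ptn) (d : ℤ) :
    (∃ m : Ptn, l.DiffersAt m d) ↔
      ((d < 0 →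
          (((l.rho d : ℤ) - (l.rho (d - 1) : ℤ), (l.rho (d + 1) : ℤ) - (l.rho d : ℤ)) = (1, 0) ∨
           ((l.rho d : ℤ) - (l.rho (d - 1) : ℤ), (l.rho (d + 1) : ℤ) - (l.rho d : ℤ)) = (0, 1))) ∧
       (d = 0 →
          (((l.rho d : ℤ) - (l.rho (d - 1) : ℤ), (l.rho (d + 1) : ℤ) - (l.rho d : ℤ)) = (1, -1) ∨
           ((l.rho d : ℤ) - (l.rho (d - 1) : ℤ), (l.rho (d + 1) : ℤ) - (l.rho d : ℤ)) = (0, 0))) ∧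
       (0 < d →
          (((l.rho d : ℤ) - (l.rho (d - 1) : ℤ), (l.rho (d + 1) : ℤ) - (l.rho d : ℤ)) = (0, -1) ∨
           ((l.rho d : ℤ) - (l.rho (d - 1) : ℤ), (l.rho (d + 1) : ℤ) - (l.rho d : ℤ)) = (-1, 0)))) := by
  classical
  rw [Ptn.exists_differsAt_iff l d]
  have h1 := Ptn.ac_step l d
  have h2 := Ptn.ac_step l (d + 1)
  rcases lt_trichotomy d 0 with hd | hd | hd
  · have hrd : (l.rho d : ℤ) = (l.ac (d + 1) : ℤ) + d := Ptn.rho_nonpos_d l d hd.le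
    have hrdm : (l.rho (d - 1) : ℤ) = (l.ac d : ℤ) + (d - 1) := by
      have h := Ptn.rho_nonpos_d l (d - 1) (by omega)
      rwa [show d - 1 + 1 = d by ring] at h
    have hrdp : (l.rho (d + 1) : ℤ) = (l.ac (d + 1 + 1) : ℤ) + (d + 1) :=
      Ptn.rho_nonpos_d l (d + 1) (by omega)
    by_cases hP : ∃ r, l.v r = d <;> by_cases hQ : ∃ r, l.v r = d + 1 <;>
      simp only [hP, hQ, if_true, if_false, not_true_eq_false, not_false_eq_true,
        true_and, and_true, false_and, and_false, or_false, false_or, or_self,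
        true_iff, false_iff, iff_true, iff_false, true_implies, Prod.mk.injEq] at h1 h2 ⊢ <;>
      omega
  · subst hd
    have hrd : l.rho 0 = l.ac (0 + 1) := Ptn.rho_nonneg_d l 0 le_rfl
    have hrdm : (l.rho (0 - 1) : ℤ) = (l.ac 0 : ℤ) + (0 - 1) := by
      have h := Ptn.rho_nonpos_d l (0 - 1) (by omega)
      rwa [show (0 : ℤ) - 1 + 1 = 0 by ring] at h
    have hrdp : l.rho (0 + 1) = l.ac (0 + 1 + 1) := Ptn.rho_nonneg_d l (0 + 1) (by omega)
    by_cases hP : ∃ r, l.v r = 0 <;> by_cases hQ : ∃ r, l.v r = 0 + 1 <;>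
      simp only [hP, hQ, if_true, if_false, not_true_eq_false, not_false_eq_true,
        true_and, and_true, false_and, and_false, or_false, false_or, or_self,
        true_iff, false_iff, iff_true, iff_false, true_implies, Prod.mk.injEq] at h1 h2 ⊢ <;>
      omega
  · have hrd : l.rho d = l.ac (d + 1) := Ptn.rho_nonneg_d l d hd.le
    have hrdm : l.rho (d - 1) = l.ac d := by
      have h := Ptn.rho_nonneg_d l (d - 1) (by omega)
      rwa [show d - 1 + 1 = d by ring] at h
    have hrdp : l.rho (d + 1) = l.ac (d + 1 + 1) := Ptn.rho_nonneg_d l (d + 1) (by omega)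
    by_cases hP : ∃ r, l.v r = d <;> by_cases hQ : ∃ r, l.v r = d + 1 <;>
      simp only [hP, hQ, if_true, if_false, not_true_eq_false, not_false_eq_true,
        true_and, and_true, false_and, and_false, or_false, false_or, or_self,
        true_iff, false_iff, iff_true, iff_false, true_implies, Prod.mk.injEq] at h1 h2 ⊢ <;>
      omega
end

section
/- For any tuple P of osculating paths in an a×b rectangle with boundary point pair (α,β), and any integer d, the number of vacancies of P with content d minus the number of osculations of P with content d equals ρ_d(λ_{a,b,α,β}), the number of cells of content d in the Young diagram of λ_{a,b,α,β}. -/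
/-- `mu` has rank `r` and Frobenius coordinates `(g 0,...,g (r-1) | d 0,...,d (r-1))`. -/
def IsFrobenius (mu : Ptn) (r : ℕ) (g d : ℕ → ℕ) : Prop :=
  mu.rank = r ∧ (∀ i : ℕ, i < r → mu.parts i = g i + i + 1) ∧
    (∀ i : ℕ, i < r → mu.conj i = d i + i + 1)

/-- `lam = λ_{a,b,α,β}`, the `(a,b)`-complement of the partition with Frobenius
notation `(b-β₁,...,b-β_r | a-α₁,...,a-α_r)`. -/
def IsBdryPtn (a b : ℕ) (α β : Finset ℕ) (lam : Ptn) : Prop :=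
  ∃ mu : Ptn,
    IsFrobenius mu α.card (fun i => b - (β.sort (· ≤ ·)).getD i 0)
      (fun i => a - (α.sort (· ≤ ·)).getD i 0) ∧
    IsComplementOf a b lam mu
/-- A unit step rightwards `(0,1)` or upwards `(-1,0)` (matrix coordinates). -/
def IsStep (x y : ℤ × ℤ) : Prop := y = (x.1, x.2 + 1) ∨ y = (x.1 - 1, x.2)

/-- `p` is a path from `s` to `t` taking only steps `(0,1)` or `(-1,0)`. -/
def IsPathFT (p : List (ℤ × ℤ)) (s t : ℤ × ℤ) : Prop :=
  p.head? = some s ∧ p.getLast? = some t ∧ p.Chain' IsStep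

/-- Paths `P` (the lower path) and `Q` (the upper path) osculate: at any shared
point the local configuration is fixed, so they neither cross nor share edges. -/
def Osc (P Q : List (ℤ × ℤ)) : Prop :=
  ∀ l l' : ℕ, l < P.length → l' < Q.length →
    P.getD l (0, 0) = Q.getD l' (0, 0) →
      0 < l ∧ l + 1 < P.length ∧
      P.getD (l - 1) (0, 0) = ((P.getD l (0, 0)).1, (P.getD l (0, 0)).2 - 1) ∧
      P.getD (l + 1) (0, 0) = ((P.getD l (0, 0)).1 - 1, (P.getD l (0, 0)).2) ∧
      (0 < l' → Q.getD (l' - 1) (0, 0) = ((P.getD l (0, 0)).1 + 1, (P.getD l (0, 0)).2)) ∧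
      (l' + 1 < Q.length → Q.getD (l' + 1) (0, 0) = ((P.getD l (0, 0)).1, (P.getD l (0, 0)).2 + 1))

/-- `P` is a tuple of osculating paths in the `a × b` rectangle with boundary pair `(α,β)`:
the `k`-th path runs from `(a, β_k)` to `(α_k, b)` and consecutive paths osculate. -/
def IsOscTuple (a b : ℕ) (α β : Finset ℕ) (P : List (List (ℤ × ℤ))) : Prop :=
  α ⊆ Finset.Icc 1 a ∧ β ⊆ Finset.Icc 1 b ∧ α.card = β.card ∧ P.length = α.card ∧
  (∀ k : ℕ, k < P.length →
    IsPathFT (P.getD k []) ((a : ℤ), (((β.sort (· ≤ ·)).getD k 0 : ℕ) : ℤ))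
      ((((α.sort (· ≤ ·)).getD k 0 : ℕ) : ℤ), (b : ℤ))) ∧
  (∀ k : ℕ, k + 1 < P.length → Osc (P.getD k []) (P.getD (k + 1) []))

/-- The set of lattice points of the `a × b` rectangle. -/
def rectZ (a b : ℕ) : Set (ℤ × ℤ) :=
  {v | 1 ≤ v.1 ∧ v.1 ≤ (a : ℤ) ∧ 1 ≤ v.2 ∧ v.2 ≤ (b : ℤ)}

/-- The number of paths of the tuple `P` passing through the point `v`. -/
noncomputable def passCount (P : List (List (ℤ × ℤ))) (v : ℤ × ℤ) : ℕ :=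
  {k : ℕ | k < P.length ∧ v ∈ P.getD k []}.ncard

/-- The vacancy-osculation set of `P`: points through which zero or two paths pass. -/
def Zset (a b : ℕ) (P : List (List (ℤ × ℤ))) : Set (ℤ × ℤ) :=
  {v ∈ rectZ a b | passCount P v = 0 ∨ passCount P v = 2}

set_option linter.unusedVariables false in
section
namespace S12

lemma chain_get {p : List (ℤ × ℤ)} (hc : p.Chain' IsStep) {n : ℕ} (h : n + 1 < p.length) :
    IsStep (p[n]'(by omega)) (p[n+1]'h) := by
  have := List.isChain_iff_getElem.mp hc n (by omega)
  simpa using this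

lemma step_facts {x y : ℤ × ℤ} (h : IsStep x y) :
    y.2 - y.1 = x.2 - x.1 + 1 ∧ x.1 - 1 ≤ y.1 ∧ y.1 ≤ x.1 ∧ x.2 ≤ y.2 ∧ y.2 ≤ x.2 + 1 := by
  rcases h with h | h <;> simp [h] <;> omega

lemma content_get {p : List (ℤ × ℤ)} (hc : p.Chain' IsStep) :
    ∀ n (h : n < p.length), ((p[n]'h).2 - (p[n]'h).1) = ((p[0]'(by omega)).2 - (p[0]'(by omega)).1) + n := by
  intro n
  induction n with
  | zero => intro h; simp
  | succ m ih =>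
    intro h
    have h1 : m < p.length := by omega
    have := step_facts (chain_get hc h)
    have := ih h1
    push_cast
    omega

lemma coord_mono {p : List (ℤ × ℤ)} (hc : p.Chain' IsStep) :
    ∀ m n (hmn : m ≤ n) (h : n < p.length),
      (p[n]'h).1 ≤ (p[m]'(by omega)).1 ∧ (p[m]'(by omega)).2 ≤ (p[n]'h).2 := by
  intro m n hmn
  induction n with
  | zero =>
    intro h
    obtain rfl : m = 0 := by omega
    exact ⟨le_rfl, le_rfl⟩
  | succ k ih =>
    intro h
    rcases Nat.lt_or_ge m (k+1) with hm | hm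
    · have h1 : k < p.length := by omega
      have := ih (by omega) h1
      have := step_facts (chain_get hc h)
      constructor <;> omega
    · obtain rfl : m = k + 1 := by omega
      exact ⟨le_rfl, le_rfl⟩

end S12

namespace S12

lemma path_ne_nil {p : List (ℤ × ℤ)} {s t : ℤ × ℤ} (hp : IsPathFT p s t) : 0 < p.length := by
  rcases p with _ | ⟨x, l⟩
  · simp [IsPathFT] at hp
  · simp

lemma path_head {p : List (ℤ × ℤ)} {s t : ℤ × ℤ} (hp : IsPathFT p s t) :
    p[0]'(path_ne_nil hp) = s := by
  have h := hp.1
  rw [List.head?_eq_getElem?, List.getElem?_eq_getElem (path_ne_nil hp)] at h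
  simpa using h

lemma path_last {p : List (ℤ × ℤ)} {s t : ℤ × ℤ} (hp : IsPathFT p s t) :
    p[p.length - 1]'(by have := path_ne_nil hp; omega) = t := by
  have h := hp.2.1
  rw [List.getLast?_eq_getElem?, List.getElem?_eq_getElem (by have := path_ne_nil hp; omega)] at h
  simpa using h

/-- content of the n-th point -/
lemma path_content {p : List (ℤ × ℤ)} {s t : ℤ × ℤ} (hp : IsPathFT p s t)
    {n : ℕ} (h : n < p.length) : (p[n]'h).2 - (p[n]'h).1 = (s.2 - s.1) + n := by
  have := content_get hp.2.2 n h
  rw [path_head hp] at this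
  exact this

lemma path_len {p : List (ℤ × ℤ)} {s t : ℤ × ℤ} (hp : IsPathFT p s t) :
    (p.length : ℤ) = (t.2 - t.1) - (s.2 - s.1) + 1 := by
  have h0 := path_ne_nil hp
  have := path_content hp (n := p.length - 1) (by omega)
  rw [path_last hp] at this
  push_cast at this
  omega

lemma path_bounds {p : List (ℤ × ℤ)} {s t : ℤ × ℤ} (hp : IsPathFT p s t)
    {n : ℕ} (h : n < p.length) :
    t.1 ≤ (p[n]'h).1 ∧ (p[n]'h).1 ≤ s.1 ∧ s.2 ≤ (p[n]'h).2 ∧ (p[n]'h).2 ≤ t.2 := by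
  have h0 := path_ne_nil hp
  have h1 := coord_mono hp.2.2 0 n (by omega) h
  have h2 := coord_mono hp.2.2 n (p.length - 1) (by omega) (by omega)
  rw [path_head hp] at h1
  rw [path_last hp] at h2
  exact ⟨h2.1, h1.1, h1.2, h2.2⟩

/-- the unique point of content `d` on a path -/
lemma path_mem_iff {p : List (ℤ × ℤ)} {s t : ℤ × ℤ} (hp : IsPathFT p s t) {v : ℤ × ℤ} :
    v ∈ p ↔ ∃ n, ∃ h : n < p.length, p[n] = v := List.mem_iff_getElem

lemma path_idx_of_content {p : List (ℤ × ℤ)} {s t : ℤ × ℤ} (hp : IsPathFT p s t)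
    {d : ℤ} (h1 : s.2 - s.1 ≤ d) (h2 : d ≤ t.2 - t.1) :
    ∃ n, ∃ h : n < p.length, (p[n]'h).2 - (p[n]'h).1 = d := by
  refine ⟨(d - (s.2 - s.1)).toNat, ?_, ?_⟩
  · have := path_len hp; omega
  · rw [path_content hp]; omega

end S12

namespace S12

/-- key monotonicity: at equal content, the lower path `p` is weakly left/below `q`. -/
lemma pair_mono {p q : List (ℤ × ℤ)} {sp tp sq tq : ℤ × ℤ}
    (hp : IsPathFT p sp tp) (hq : IsPathFT q sq tq) (ho : Osc p q)
    (hs1 : sp.1 ≤ sq.1) (hs2 : sp.2 - sp.1 ≤ sq.2 - sq.1) :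
    ∀ n m (hn : n < q.length) (hm : m < p.length),
      (p[m]'hm).2 - (p[m]'hm).1 = (q[n]'hn).2 - (q[n]'hn).1 →
      (p[m]'hm).1 ≤ (q[n]'hn).1 := by
  intro n
  induction n with
  | zero =>
    intro m hn hm _
    have := path_bounds hp hm
    have h0 := path_head hq
    calc (p[m]'hm).1 ≤ sp.1 := this.2.1
      _ ≤ sq.1 := hs1
      _ = (q[0]'hn).1 := by rw [h0]
  | succ n ih =>
    intro m hn hm hcont
    have hcp := path_content hp hm
    have hcq := path_content hq hn
    have hcq' := path_content hq (n := n) (by omega)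
    have hm1 : 1 ≤ m := by omega
    have hm' : m - 1 < p.length := by omega
    have hcp' := path_content hp hm'
    have hstep_p := step_facts (chain_get hp.2.2 (n := m - 1) (by omega))
    have hstep_q := step_facts (chain_get hq.2.2 (n := n) (by omega))
    have hprev : (p[m-1]'hm').2 - (p[m-1]'hm').1 = (q[n]'(by omega : n < q.length)).2 - (q[n]'(by omega)).1 := by
      omega
    have hle := ih (m - 1) (by omega) hm' hprev
    rcases lt_or_eq_of_le hle with hlt | heq
    · -- strict: p stays ≤ q even after steps
      have hmono := coord_mono hp.2.2 (m-1) m (by omega) hm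
      omega
    · -- equal fst and equal content: same point; use osculation
      have hpt : p[m-1]'hm' = q[n]'(by omega : n < q.length) := by
        have : (p[m-1]'hm').2 = (q[n]'(by omega : n < q.length)).2 := by omega
        exact Prod.ext heq this
      have hod := ho (m-1) n (by omega) (by omega) (by
        rw [List.getD_eq_getElem _ _ hm', List.getD_eq_getElem _ _ (by omega : n < q.length)]
        exact hpt)
      obtain ⟨-, hlen, -, hnext, -, hqnext⟩ := hod
      have e1 : m - 1 + 1 = m := by omega
      rw [e1] at hnext
      have hqn := hqnext hn
      rw [List.getD_eq_getElem _ _ hm, List.getD_eq_getElem _ _ hm'] at hnext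
      rw [List.getD_eq_getElem _ _ hn, List.getD_eq_getElem _ _ hm'] at hqn
      rw [hnext, hqn]
      simp

end S12

namespace S12

lemma sort_getD_mono {s : Finset ℕ} {k k' : ℕ} (h : k ≤ k') (h' : k' < s.card) :
    (s.sort (· ≤ ·)).getD k 0 ≤ (s.sort (· ≤ ·)).getD k' 0 := by
  rcases eq_or_lt_of_le h with rfl | hlt
  · exact le_rfl
  · have hs := Finset.pairwise_sort s (· ≤ ·)
    have hlen : (s.sort (· ≤ ·)).length = s.card := Finset.length_sort _
    have := List.pairwise_iff_get.mp hs ⟨k, by omega⟩ ⟨k', by omega⟩ hlt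
    rwa [List.getD_eq_getElem _ _ (by omega), List.getD_eq_getElem _ _ (by omega)]

lemma sort_getD_mem {s : Finset ℕ} {k : ℕ} (h : k < s.card) :
    (s.sort (· ≤ ·)).getD k 0 ∈ s := by
  have hlen : (s.sort (· ≤ ·)).length = s.card := Finset.length_sort _
  rw [List.getD_eq_getElem _ _ (by omega)]
  exact (Finset.mem_sort _).mp (List.getElem_mem _)

section Tuple

variable {a b : ℕ} {α β : Finset ℕ} {P : List (List (ℤ × ℤ))}

/-- abbreviations -/
noncomputable def sa (α : Finset ℕ) (k : ℕ) : ℕ := (α.sort (· ≤ ·)).getD k 0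
noncomputable def sb (β : Finset ℕ) (k : ℕ) : ℕ := (β.sort (· ≤ ·)).getD k 0

lemma tuple_path (hP : IsOscTuple a b α β P) {k : ℕ} (hk : k < P.length) :
    IsPathFT (P.getD k []) ((a : ℤ), (sb β k : ℤ)) ((sa α k : ℤ), (b : ℤ)) :=
  hP.2.2.2.2.1 k hk

lemma sa_bounds (hP : IsOscTuple a b α β P) {k : ℕ} (hk : k < P.length) :
    1 ≤ sa α k ∧ sa α k ≤ a := by
  have hlc : P.length = α.card := hP.2.2.2.1
  have := hP.1 (sort_getD_mem (s := α) (k := k) (by omega))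
  simpa [sa, Finset.mem_Icc] using this

lemma sb_bounds (hP : IsOscTuple a b α β P) {k : ℕ} (hk : k < P.length) :
    1 ≤ sb β k ∧ sb β k ≤ b := by
  have hcard : P.length = β.card := by rw [hP.2.2.2.1, hP.2.2.1]
  have := hP.2.1 (sort_getD_mem (s := β) (k := k) (by omega))
  simpa [sb, Finset.mem_Icc] using this

lemma sa_mono (hP : IsOscTuple a b α β P) {k k' : ℕ} (h : k ≤ k') (hk' : k' < P.length) :
    sa α k ≤ sa α k' := by
  have hlc : P.length = α.card := hP.2.2.2.1
  exact sort_getD_mono h (by omega)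

lemma sb_mono (hP : IsOscTuple a b α β P) {k k' : ℕ} (h : k ≤ k') (hk' : k' < P.length) :
    sb β k ≤ sb β k' := by
  have hcard : P.length = β.card := by rw [hP.2.2.2.1, hP.2.2.1]
  exact sort_getD_mono h (by omega)

end Tuple

end S12

namespace S12
section Tuple2

variable {a b : ℕ} {α β : Finset ℕ} {P : List (List (ℤ × ℤ))}

lemma tuple_mono (hP : IsOscTuple a b α β P) :
    ∀ k' k, k ≤ k' → ∀ (hk' : k' < P.length) m m'
      (hm : m < (P.getD k []).length) (hm' : m' < (P.getD k' []).length),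
      ((P.getD k [])[m]'hm).2 - ((P.getD k [])[m]'hm).1
        = ((P.getD k' [])[m']'hm').2 - ((P.getD k' [])[m']'hm').1 →
      ((P.getD k [])[m]'hm).1 ≤ ((P.getD k' [])[m']'hm').1 := by
  intro k'
  induction k' with
  | zero =>
    intro k hk hk' m m' hm hm' hcont
    obtain rfl : k = 0 := by omega
    have hcp := path_content (tuple_path hP hk') hm
    have hcq := path_content (tuple_path hP hk') hm'
    have : m = m' := by omega
    subst this
    exact le_rfl
  | succ j ih =>
    intro k hk hk' m m' hm hm' hcont
    rcases Nat.eq_or_lt_of_le hk with rfl | hkj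
    · -- k = j+1 : same path, same index
      have hcp := path_content (tuple_path hP hk') hm
      have hcq := path_content (tuple_path hP hk') hm'
      have : m = m' := by omega
      subst this
      exact le_rfl
    · have hkj' : k ≤ j := by omega
      have hj : j < P.length := by omega
      -- the content of the target point
      have hq := tuple_path hP hk'
      have hcq := path_content hq hm'
      have hlenq := path_len hq
      -- find the point of path j with the same content
      have hp' := tuple_path hP hj
      have hsb := sb_mono hP (by omega : j ≤ j + 1) hk'
      have hsa := sa_mono hP (by omega : j ≤ j + 1) hk'
      obtain ⟨n, hn, hcn⟩ := path_idx_of_content hp'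
        (d := ((P.getD (j+1) [])[m']'hm').2 - ((P.getD (j+1) [])[m']'hm').1)
        (by simp only []; push_cast; omega)
        (by simp only []; push_cast; omega)
      have h1 := ih k hkj' hj m n hm hn (by omega)
      have h2 := pair_mono hp' hq (hP.2.2.2.2.2 j hk') (le_rfl)
        (by push_cast; omega) m' n hm' hn (by omega)
      omega

end Tuple2
end S12

namespace S12
section Tuple3

variable {a b : ℕ} {α β : Finset ℕ} {P : List (List (ℤ × ℤ))}

lemma between_mem (hP : IsOscTuple a b α β P) {k k'' k' : ℕ} (h1 : k ≤ k'') (h2 : k'' ≤ k')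
    (hk' : k' < P.length) {v : ℤ × ℤ} (hv : v ∈ P.getD k []) (hv' : v ∈ P.getD k' []) :
    v ∈ P.getD k'' [] := by
  obtain ⟨m, hm, hvm⟩ := (path_mem_iff (tuple_path hP (by omega : k < P.length))).mp hv
  obtain ⟨m', hm', hvm'⟩ := (path_mem_iff (tuple_path hP hk')).mp hv'
  have hk'' : k'' < P.length := by omega
  have hcm := path_content (tuple_path hP (by omega : k < P.length)) hm
  have hcm' := path_content (tuple_path hP hk') hm'
  have hlen' := path_len (tuple_path hP hk')
  have hsb := sb_mono hP h2 hk'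
  have hsa := sa_mono hP h2 hk'
  obtain ⟨n, hn, hcn⟩ := path_idx_of_content (tuple_path hP hk'') (d := v.2 - v.1)
    (by simp only []; rw [hvm'] at hcm'; push_cast at hcm' ⊢; omega)
    (by simp only []; rw [hvm'] at hcm'; push_cast at hcm' hlen' ⊢; omega)
  have hle1 := tuple_mono hP k'' k h1 hk'' m n hm hn (by rw [hvm]; omega)
  have hle2 := tuple_mono hP k' k'' h2 hk' n m' hn hm' (by rw [hvm']; omega)
  have heq1 : ((P.getD k'' [])[n]'hn).1 = v.1 := by rw [hvm] at hle1; rw [hvm'] at hle2; omega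
  have heq : (P.getD k'' [])[n]'hn = v := Prod.ext heq1 (by omega)
  rw [← heq]
  exact List.getElem_mem _

lemma no_triple (hP : IsOscTuple a b α β P) {k : ℕ} (hk : k + 2 < P.length) {v : ℤ × ℤ}
    (h0 : v ∈ P.getD k []) (h1 : v ∈ P.getD (k+1) []) (h2 : v ∈ P.getD (k+2) []) : False := by
  obtain ⟨m, hm, hvm⟩ := (path_mem_iff (tuple_path hP (by omega : k < P.length))).mp h0
  obtain ⟨l, hl, hvl⟩ := (path_mem_iff (tuple_path hP (by omega : k + 1 < P.length))).mp h1
  obtain ⟨m'', hm'', hvm''⟩ := (path_mem_iff (tuple_path hP hk)).mp h2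
  have hosc1 := hP.2.2.2.2.2 k (by omega)
  have hosc2 := hP.2.2.2.2.2 (k+1) (by omega)
  have hO1 := hosc1 m l hm hl (by
    rw [List.getD_eq_getElem _ _ hm, List.getD_eq_getElem _ _ hl, hvm, hvl])
  have hO2 := hosc2 l m'' hl hm'' (by
    rw [List.getD_eq_getElem _ _ hl, List.getD_eq_getElem _ _ hm'', hvl, hvm''])
  obtain ⟨-, hlen2, -, hnext2, -, -⟩ := hO2
  have hq1 := hO1.2.2.2.2.2 hlen2
  rw [List.getD_eq_getElem _ _ hm] at hq1
  rw [List.getD_eq_getElem _ _ hl] at hnext2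
  rw [hvm] at hq1
  rw [hvl] at hnext2
  rw [hq1] at hnext2
  have := congrArg Prod.fst hnext2
  simp at this
  omega

lemma passCount_eq_card (P : List (List (ℤ × ℤ))) (v : ℤ × ℤ) :
    passCount P v = ((Finset.range P.length).filter (fun k => v ∈ P.getD k [])).card := by
  rw [passCount, ← Set.ncard_coe_finset]
  congr 1
  ext k
  simp

lemma passCount_le_two (hP : IsOscTuple a b α β P) (v : ℤ × ℤ) : passCount P v ≤ 2 := by
  rw [passCount_eq_card]
  by_contra h
  push_neg at h
  obtain ⟨x, y, z, hx, hy, hz, hxy, hxz, hyz⟩ := Finset.two_lt_card_iff.mp h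
  simp only [Finset.mem_filter, Finset.mem_range] at hx hy hz
  set k1 := min x (min y z) with hk1
  set k3 := max x (max y z) with hk3
  set k2 := x + y + z - k1 - k3 with hk2
  have hord : k1 < k2 ∧ k2 < k3 ∧ (k1 = x ∨ k1 = y ∨ k1 = z) ∧ (k2 = x ∨ k2 = y ∨ k2 = z)
      ∧ (k3 = x ∨ k3 = y ∨ k3 = z) := by omega
  have hmem : ∀ w, (w = x ∨ w = y ∨ w = z) → w < P.length ∧ v ∈ P.getD w [] := by
    rintro w (rfl | rfl | rfl) <;> assumption
  have h1 := hmem k1 hord.2.2.1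
  have h2' := hmem k2 hord.2.2.2.1
  have h3 := hmem k3 hord.2.2.2.2
  have hk3len : k3 < P.length := h3.1
  have hv1 : v ∈ P.getD (k1+1) [] := between_mem hP (by omega : k1 ≤ k1+1) (by omega : k1+1 ≤ k3) hk3len h1.2 h3.2
  have hv2 : v ∈ P.getD (k1+2) [] := between_mem hP (by omega : k1 ≤ k1+2) (by omega : k1+2 ≤ k3) hk3len h1.2 h3.2
  exact no_triple hP (by omega) h1.2 hv1 hv2

end Tuple3
end S12

namespace S12
section Count

variable {a b : ℕ} {α β : Finset ℕ} {P : List (List (ℤ × ℤ))}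

/-- the diagonal of content `d` in the rectangle, as a finset -/
noncomputable def diagF (a b : ℕ) (d : ℤ) : Finset (ℤ × ℤ) :=
  (Finset.Icc (1:ℤ) (a:ℤ) ×ˢ Finset.Icc (1:ℤ) (b:ℤ)).filter (fun v => v.2 - v.1 = d)

lemma mem_diagF {v : ℤ × ℤ} {d : ℤ} :
    v ∈ diagF a b d ↔ (1 ≤ v.1 ∧ v.1 ≤ a ∧ 1 ≤ v.2 ∧ v.2 ≤ b) ∧ v.2 - v.1 = d := by
  simp [diagF, Finset.mem_filter, Finset.mem_product, Finset.mem_Icc]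
  tauto

lemma path_diag_card (hP : IsOscTuple a b α β P) {k : ℕ} (hk : k < P.length) (d : ℤ) :
    ((diagF a b d).filter (fun v => v ∈ P.getD k [])).card
      = if ((sb β k : ℤ) - a ≤ d ∧ d ≤ (b : ℤ) - sa α k) then 1 else 0 := by
  have hpath := tuple_path hP hk
  have hsa := sa_bounds hP hk
  have hsb := sb_bounds hP hk
  split_ifs with hcond
  · obtain ⟨n, hn, hcn⟩ := path_idx_of_content hpath (d := d)
      (by simpa using hcond.1) (by simpa using hcond.2)
    rw [Finset.card_eq_one]
    refine ⟨(P.getD k [])[n]'hn, ?_⟩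
    ext w
    simp only [Finset.mem_filter, Finset.mem_singleton]
    constructor
    · rintro ⟨hwD, hwP⟩
      obtain ⟨m, hm, hwm⟩ := (path_mem_iff hpath).mp hwP
      have hcm := path_content hpath hm
      have hcn' := path_content hpath hn
      have : m = n := by
        rw [hwm] at hcm
        have := (mem_diagF.mp hwD).2
        omega
      subst this
      exact hwm.symm
    · rintro rfl
      have hbd := path_bounds hpath hn
      refine ⟨mem_diagF.mpr ⟨?_, hcn⟩, List.getElem_mem _⟩
      simp only [] at hbd
      push_cast at hbd ⊢
      omega
  · rw [Finset.card_eq_zero, Finset.eq_empty_iff_forall_notMem]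
    rintro w hw
    simp only [Finset.mem_filter] at hw
    obtain ⟨m, hm, hwm⟩ := (path_mem_iff hpath).mp hw.2
    have hcm := path_content hpath hm
    have hlen := path_len hpath
    have := (mem_diagF.mp hw.1).2
    rw [hwm] at hcm
    push_cast at hlen
    omega

lemma sum_passCount (hP : IsOscTuple a b α β P) (d : ℤ) :
    ∑ v ∈ diagF a b d, passCount P v
      = ((Finset.range P.length).filter
          (fun k => (sb β k : ℤ) - a ≤ d ∧ d ≤ (b : ℤ) - sa α k)).card := by
  have h1 : ∀ v ∈ diagF a b d, passCount P v
      = ∑ k ∈ Finset.range P.length, if v ∈ P.getD k [] then 1 else 0 := by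
    intro v _
    rw [passCount_eq_card, Finset.card_filter]
  rw [Finset.sum_congr rfl h1, Finset.sum_comm]
  rw [Finset.card_filter]
  refine Finset.sum_congr rfl fun k hk => ?_
  rw [← Finset.card_filter, path_diag_card hP (Finset.mem_range.mp hk)]

end Count
end S12

namespace S12
section Count2
variable {a b : ℕ} {α β : Finset ℕ} {P : List (List (ℤ × ℤ))}

lemma partA_eq (hP : IsOscTuple a b α β P) (d : ℤ) :
    ((((diagF a b d).filter (fun v => passCount P v = 0)).card : ℤ)
      - (((diagF a b d).filter (fun v => passCount P v = 2)).card : ℤ))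
    = ((diagF a b d).card : ℤ)
      - (((Finset.range P.length).filter
          (fun k => (sb β k : ℤ) - a ≤ d ∧ d ≤ (b : ℤ) - sa α k)).card : ℤ) := by
  have h0 : (((diagF a b d).filter (fun v => passCount P v = 0)).card : ℤ)
      = ∑ v ∈ diagF a b d, if passCount P v = 0 then (1:ℤ) else 0 := by
    rw [Finset.card_filter]
    push_cast
    rfl
  have h2 : (((diagF a b d).filter (fun v => passCount P v = 2)).card : ℤ)
      = ∑ v ∈ diagF a b d, if passCount P v = 2 then (1:ℤ) else 0 := by
    rw [Finset.card_filter]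
    push_cast
    rfl
  rw [h0, h2, ← Finset.sum_sub_distrib]
  have hkey : ∀ v ∈ diagF a b d,
      ((if passCount P v = 0 then (1:ℤ) else 0) - (if passCount P v = 2 then (1:ℤ) else 0))
        = 1 - (passCount P v : ℤ) := by
    intro v _
    have hle := passCount_le_two hP v
    interval_cases (passCount P v) <;> simp
  rw [Finset.sum_congr rfl hkey, Finset.sum_sub_distrib, Finset.sum_const, ← sum_passCount hP d]
  push_cast
  ring

end Count2
end S12

namespace S12

lemma diag_card (a b : ℕ) (d : ℤ) :
    (diagF a b d).card
      = ((Finset.Icc 1 a).filter (fun i : ℕ => 1 ≤ (i:ℤ)+d ∧ (i:ℤ)+d ≤ (b:ℤ))).card := by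
  apply Finset.card_nbij' (i := fun v : ℤ × ℤ => v.1.toNat) (j := fun i : ℕ => ((i:ℤ), (i:ℤ)+d))
  · intro v hv
    obtain ⟨⟨h1, h2, h3, h4⟩, h5⟩ := mem_diagF.mp hv
    simp only [Finset.mem_coe, Finset.mem_filter, Finset.mem_Icc]
    omega
  · intro i hi
    simp only [Finset.mem_coe, Finset.mem_filter, Finset.mem_Icc] at hi
    apply mem_diagF.mpr
    constructor
    · simp only []
      push_cast
      omega
    · simp only []
      ring
  · intro v hv
    obtain ⟨⟨h1, h2, h3, h4⟩, h5⟩ := mem_diagF.mp hv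
    have : ((v.1.toNat : ℤ)) = v.1 := by omega
    ext
    · exact this
    · simp only []; omega
  · intro i hi
    simp only [Finset.mem_coe, Finset.mem_filter, Finset.mem_Icc] at hi
    simp

lemma vacSet_eq (a b : ℕ) (P : List (List (ℤ × ℤ))) (d : ℤ) (c : ℕ) :
    {v ∈ rectZ a b | passCount P v = c ∧ v.2 - v.1 = d}
      = ↑((diagF a b d).filter (fun v => passCount P v = c)) := by
  ext v
  simp only [Set.mem_setOf_eq, Finset.coe_filter, rectZ]
  rw [mem_diagF]
  tauto

end S12

namespace S12

lemma initseg {S : Set ℕ} (hf : S.Finite) (hdc : ∀ m n : ℕ, m ≤ n → n ∈ S → m ∈ S) :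
    ∀ i, i ∈ S ↔ i < S.ncard := by
  intro i
  constructor
  · intro hi
    have hsub : (Set.Iic i : Set ℕ) ⊆ S := fun m hm => hdc m i hm hi
    have := Set.ncard_le_ncard hsub hf
    have hIic : (Set.Iic i).ncard = i + 1 := by
      rw [← Finset.coe_Iic, Set.ncard_coe_finset, Nat.card_Iic]
    omega
  · intro hi
    by_contra hmem
    have hsub : S ⊆ Set.Iio i := by
      intro m hm
      by_contra hmi
      exact hmem (hdc i m (by simpa [Set.mem_Iio] using hmi) hm)
    have := Set.ncard_le_ncard hsub (Set.finite_Iio i)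
    have hIio : (Set.Iio i).ncard = i := by
      rw [← Finset.coe_Iio, Set.ncard_coe_finset, Nat.card_Iio]
    omega

lemma parts_lt_iff (mu : Ptn) (i j : ℕ) : j < mu.parts i ↔ i < mu.conj j := by
  obtain ⟨N, hN⟩ := mu.finite
  have hf : ({i : ℕ | j < mu.parts i}).Finite := by
    apply Set.Finite.subset (Set.finite_Iio N)
    intro m hm
    simp only [Set.mem_setOf_eq] at hm
    by_contra h
    have := hN m (by simpa [Set.mem_Iio] using h)
    omega
  have hdc : ∀ m n : ℕ, m ≤ n → n ∈ {i : ℕ | j < mu.parts i} → m ∈ {i : ℕ | j < mu.parts i} := by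
    intro m n hmn hn
    simp only [Set.mem_setOf_eq] at *
    have := mu.antitone m n hmn
    omega
  exact initseg hf hdc i

lemma rank_iff (mu : Ptn) (k : ℕ) : k < mu.parts k ↔ k < mu.rank := by
  obtain ⟨N, hN⟩ := mu.finite
  have hf : ({i : ℕ | i < mu.parts i}).Finite := by
    apply Set.Finite.subset (Set.finite_Iio N)
    intro m hm
    simp only [Set.mem_setOf_eq] at hm
    by_contra h
    have := hN m (by simpa [Set.mem_Iio] using h)
    omega
  have hdc : ∀ m n : ℕ, m ≤ n → n ∈ {i : ℕ | i < mu.parts i} → m ∈ {i : ℕ | i < mu.parts i} := by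
    intro m n hmn hn
    simp only [Set.mem_setOf_eq] at *
    have := mu.antitone m n hmn
    omega
  exact initseg hf hdc k

lemma conj_rank_iff (mu : Ptn) (k : ℕ) : k < mu.conj k ↔ k < mu.rank := by
  rw [← parts_lt_iff, rank_iff]

/-- the core Frobenius-coordinate counting identity -/
lemma core (μc μ' : ℕ → ℕ) (r A : ℕ) (e : ℤ)
    (dual : ∀ i j : ℕ, j < μc i ↔ i < μ' j)
    (hrank : ∀ k : ℕ, k < μc k ↔ k < r)
    (hrank' : ∀ k : ℕ, k < μ' k ↔ k < r)
    (hbig : ∀ m : ℕ, 0 ≤ (m:ℤ) + e → e < (μc m : ℤ) - m → m < A) :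
    ((Finset.range A).filter (fun m : ℕ => 0 ≤ (m:ℤ) + e ∧ e < (μc m:ℤ) - (m:ℤ))).card
      = ((Finset.range r).filter (fun k : ℕ => e < (μc k:ℤ) - (k:ℤ) ∧ -e < (μ' k:ℤ) - (k:ℤ))).card := by
  rcases le_or_gt 0 e with he | he
  · -- e ≥ 0 : both sides are {k < r : e < μc k - k}
    congr 1
    ext m
    simp only [Finset.mem_filter, Finset.mem_range]
    constructor
    · rintro ⟨hmA, -, hcond⟩
      have h1 : m < μc m := by omega
      have h2 : m < r := (hrank m).mp h1
      have h3 : m < μ' m := (hrank' m).mpr h2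
      exact ⟨h2, hcond, by omega⟩
    · rintro ⟨hmr, hcond, -⟩
      exact ⟨hbig m (by omega) hcond, by omega, hcond⟩
  · -- e < 0
    set n : ℕ := (-e).toNat with hn
    have hne : (n : ℤ) = -e := by omega
    apply Finset.card_nbij' (fun m => m - n) (fun k => k + n)
    · rintro m hm
      simp only [Finset.mem_coe, Finset.mem_filter, Finset.mem_range] at hm ⊢
      obtain ⟨hmA, hm0, hcond⟩ := hm
      have hmn : n ≤ m := by omega
      have h1 : m - n < μc m := by omega
      have h2 : m < μ' (m - n) := (dual m (m - n)).mp h1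
      have h3 : m - n < μ' (m - n) := by omega
      have h4 : m - n < r := (hrank' (m - n)).mp h3
      have h5 : m - n < μc (m - n) := (hrank (m - n)).mpr h4
      refine ⟨h4, by omega, by omega⟩
    · rintro k hk
      simp only [Finset.mem_coe, Finset.mem_filter, Finset.mem_range] at hk ⊢
      obtain ⟨hkr, hc1, hc2⟩ := hk
      have h1 : k + n < μ' k := by omega
      have h2 : k < μc (k + n) := (dual (k + n) k).mpr h1
      have hcond : e < (μc (k+n) : ℤ) - (k+n) := by omega
      exact ⟨hbig (k+n) (by omega) hcond, by omega, hcond⟩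
    · intro m hm
      simp only [Finset.mem_coe, Finset.mem_filter, Finset.mem_range] at hm
      beta_reduce
      omega
    · intro k _
      beta_reduce
      omega

end S12

namespace S12


lemma partB (a b : ℕ) (α β : Finset ℕ)
    (hα : α ⊆ Finset.Icc 1 a) (hβ : β ⊆ Finset.Icc 1 b) (hcard : α.card = β.card)
    (lam : Ptn) (hlam : IsBdryPtn a b α β lam) (d : ℤ) :
    ((((Finset.Icc 1 a).filter (fun i : ℕ => 1 ≤ (i:ℤ)+d ∧ (i:ℤ)+d ≤ (b:ℤ))).card : ℤ))
      - (((Finset.range α.card).filter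
          (fun k : ℕ => (sb β k : ℤ) - (a:ℤ) ≤ d ∧ d ≤ (b:ℤ) - (sa α k : ℤ))).card : ℤ)
      = (lam.rho d : ℤ) := by
  obtain ⟨mu, hfrob, hcomp⟩ := hlam
  set r := α.card with hr
  -- basic bounds on sorted values
  have hsa : ∀ k, k < r → 1 ≤ sa α k ∧ sa α k ≤ a := by
    intro k hk
    have := hα (sort_getD_mem (s := α) (k := k) (by omega))
    simpa [sa, Finset.mem_Icc] using this
  have hsb : ∀ k, k < r → 1 ≤ sb β k ∧ sb β k ≤ b := by
    intro k hk
    have := hβ (sort_getD_mem (s := β) (k := k) (by omega))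
    simpa [sb, Finset.mem_Icc] using this
  -- facts about mu
  have hrank : ∀ k : ℕ, k < mu.parts k ↔ k < r := by
    intro k; rw [rank_iff, hfrob.1]
  have hrank' : ∀ k : ℕ, k < mu.conj k ↔ k < r := by
    intro k; rw [conj_rank_iff, hfrob.1]
  have hmu_le_b : ∀ m, mu.parts m ≤ b := by
    intro m
    rcases Nat.eq_zero_or_pos r with h0 | hpos
    · have h1 : ¬ (0 < mu.parts 0) := by
        intro h; have := (hrank 0).mp h; omega
      have := mu.antitone 0 m (Nat.zero_le m)
      omega
    · have h1 : mu.parts 0 = (b - sb β 0) + 0 + 1 := hfrob.2.1 0 hpos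
      have h2 := hsb 0 hpos
      have := mu.antitone 0 m (Nat.zero_le m)
      omega
  have hconj0 : mu.conj 0 ≤ a := by
    rcases Nat.eq_zero_or_pos r with h0 | hpos
    · by_contra h
      have h1 : 0 < mu.conj 0 := by omega
      have h2 : (0:ℕ) < mu.parts 0 := (parts_lt_iff mu 0 0).mpr h1
      have := (hrank 0).mp h2
      omega
    · have h1 : mu.conj 0 = (a - sa α 0) + 0 + 1 := hfrob.2.2 0 hpos
      have h2 := hsa 0 hpos
      omega
  have hsupp : ∀ m, a ≤ m → mu.parts m = 0 := by
    intro m hm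
    by_contra h
    have h1 : 0 < mu.parts m := by omega
    have h2 : m < mu.conj 0 := (parts_lt_iff mu m 0).mp h1
    omega
  -- lam facts
  have hlam_parts : ∀ i : ℕ, 1 ≤ i → i ≤ a → (lam.parts (i-1) : ℤ) = (b:ℤ) - mu.parts (a-i) := by
    intro i h1 h2
    have := hcomp (i-1)
    rw [this]
    rw [if_pos (by omega)]
    have e : a - 1 - (i-1) = a - i := by omega
    rw [e]
    have := hmu_le_b (a - i)
    push_cast
    omega
  have hlam_out : ∀ k : ℕ, a ≤ k → lam.parts k = 0 := by
    intro k hk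
    rw [hcomp k, if_neg (by omega)]
  have hlam_le_b : ∀ k : ℕ, lam.parts k ≤ b := by
    intro k
    rw [hcomp k]
    split_ifs <;> omega
  -- rho as a finset card over rows
  set Nρ := (Finset.Icc 1 a).filter
      (fun i : ℕ => 1 ≤ (i:ℤ)+d ∧ (i:ℤ)+d ≤ (lam.parts (i-1) : ℤ)) with hNρ
  have hrho : lam.rho d = Nρ.card := by
    have himg : ({p ∈ lam.ycells | (p.2 : ℤ) - (p.1 : ℤ) = d} : Set (ℕ × ℕ))
        = ↑(Nρ.image (fun i : ℕ => (i, ((i:ℤ)+d).toNat))) := by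
      ext ⟨i, j⟩
      simp only [hNρ, Finset.coe_image, Set.mem_image, Finset.mem_coe, Finset.mem_filter,
        Finset.mem_Icc, Set.mem_setOf_eq, Ptn.ycells, Prod.mk.injEq]
      constructor
      · rintro ⟨⟨hi1, hj1, hjle⟩, hcont⟩
        have hia : i ≤ a := by
          by_contra hia
          have := hlam_out (i-1) (by omega)
          omega
        have hjd : (j:ℤ) = (i:ℤ) + d := by omega
        refine ⟨i, ⟨⟨hi1, hia⟩, by omega, by omega⟩, rfl, by omega⟩
      · rintro ⟨i', ⟨⟨hi1, hia⟩, hd1, hd2⟩, rfl, rfl⟩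
        have hlb := hlam_le_b (i' - 1)
        constructor
        · exact ⟨hi1, by omega, by omega⟩
        · push_cast
          omega
    rw [Ptn.rho, himg, Set.ncard_coe_finset]
    apply Finset.card_image_of_injOn
    intro x hx y hy hxy
    exact congrArg Prod.fst hxy
  rw [hrho]
  -- split the L-count
  set La := (Finset.Icc 1 a).filter (fun i : ℕ => 1 ≤ (i:ℤ)+d ∧ (i:ℤ)+d ≤ (b:ℤ)) with hLa
  have hsplit := Finset.card_filter_add_card_filter_not
    (s := La) (p := fun i : ℕ => (i:ℤ)+d ≤ (lam.parts (i-1) : ℤ))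
  have hfilterρ : La.filter (fun i : ℕ => (i:ℤ)+d ≤ (lam.parts (i-1) : ℤ)) = Nρ := by
    ext i
    simp only [Finset.mem_filter, Finset.mem_Icc, hLa, hNρ]
    constructor
    · rintro ⟨⟨hIcc, h1, h2⟩, h3⟩
      exact ⟨hIcc, h1, h3⟩
    · rintro ⟨hIcc, h1, h3⟩
      have := hlam_le_b (i-1)
      refine ⟨⟨hIcc, h1, by omega⟩, h3⟩
  rw [hfilterρ] at hsplit
  -- the "bad rows" count equals the crossing count, via the core identity
  set e : ℤ := (b:ℤ) - d - (a:ℤ) with he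
  have hM : (La.filter (fun i : ℕ => ¬ ((i:ℤ)+d ≤ (lam.parts (i-1) : ℤ)))).card
      = ((Finset.range a).filter
          (fun m : ℕ => 0 ≤ (m:ℤ) + e ∧ e < (mu.parts m : ℤ) - (m:ℤ))).card := by
    apply Finset.card_nbij' (fun i => a - i) (fun m => a - m)
    · intro i hi
      simp only [Finset.mem_coe, Finset.mem_filter, Finset.mem_Icc, Finset.mem_range, hLa] at hi ⊢
      obtain ⟨⟨⟨hi1, hia⟩, h1, h2⟩, h3⟩ := hi
      have hcast := hlam_parts i hi1 hia
      refine ⟨by omega, by push_cast; omega, by push_cast; omega⟩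
    · intro m hm
      simp only [Finset.mem_coe, Finset.mem_filter, Finset.mem_Icc, Finset.mem_range, hLa] at hm ⊢
      obtain ⟨hma, h1, h2⟩ := hm
      have hcast := hlam_parts (a - m) (by omega) (by omega)
      have hmm : a - (a - m) = m := by omega
      rw [hmm] at hcast
      have hble := hmu_le_b m
      refine ⟨⟨⟨by omega, by omega⟩, by push_cast; omega, by push_cast; omega⟩,
        by push_cast; omega⟩
    · intro i hi
      simp only [Finset.mem_coe, Finset.mem_filter, Finset.mem_Icc, hLa] at hi
      beta_reduce
      omega
    · intro m hm
      simp only [Finset.mem_coe, Finset.mem_filter, Finset.mem_range] at hm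
      beta_reduce
      omega
  have hN : ((Finset.range r).filter
        (fun k : ℕ => (sb β k : ℤ) - (a:ℤ) ≤ d ∧ d ≤ (b:ℤ) - (sa α k : ℤ))).card
      = ((Finset.range r).filter
        (fun k : ℕ => e < (mu.parts k : ℤ) - (k:ℤ) ∧ -e < (mu.conj k : ℤ) - (k:ℤ))).card := by
    congr 1
    ext k
    simp only [Finset.mem_filter, Finset.mem_range]
    constructor
    · rintro ⟨hk, h1, h2⟩
      have hp : mu.parts k = (b - sb β k) + k + 1 := hfrob.2.1 k hk
      have hc : mu.conj k = (a - sa α k) + k + 1 := hfrob.2.2 k hk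
      have := hsa k hk
      have := hsb k hk
      exact ⟨hk, by omega, by omega⟩
    · rintro ⟨hk, h1, h2⟩
      have hp : mu.parts k = (b - sb β k) + k + 1 := hfrob.2.1 k hk
      have hc : mu.conj k = (a - sa α k) + k + 1 := hfrob.2.2 k hk
      have := hsa k hk
      have := hsb k hk
      exact ⟨hk, by omega, by omega⟩
  have hbig : ∀ m : ℕ, 0 ≤ (m:ℤ) + e → e < (mu.parts m : ℤ) - (m:ℤ) → m < a := by
    intro m h1 h2
    by_contra h
    have := hsupp m (by omega)
    omega
  have hcore := core mu.parts mu.conj r a e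
    (fun i j => parts_lt_iff mu i j) hrank hrank' hbig
  rw [hN, ← hcore, ← hM]
  omega

end S12
end

/-- For any osculating path tuple `P` with boundary pair `(α,β)` and any content `d`,
(number of vacancies of content `d`) - (number of osculations of content `d`)
equals `ρ_d(λ_{a,b,α,β})`. -/
theorem statement12 (a b : ℕ) (ha : 0 < a) (hb : 0 < b) (α β : Finset ℕ)
    (P : List (List (ℤ × ℤ))) (hP : IsOscTuple a b α β P)
    (lam : Ptn) (hlam : IsBdryPtn a b α β lam) (d : ℤ) :
    ({v ∈ rectZ a b | passCount P v = 0 ∧ v.2 - v.1 = d}.ncard : ℤ)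
        - ({v ∈ rectZ a b | passCount P v = 2 ∧ v.2 - v.1 = d}.ncard : ℤ)
      = (lam.rho d : ℤ) := by
  rw [S12.vacSet_eq, S12.vacSet_eq, Set.ncard_coe_finset, Set.ncard_coe_finset]
  rw [S12.partA_eq hP d]
  rw [S12.diag_card]
  have hlen : P.length = α.card := hP.2.2.2.1
  rw [hlen]
  exact S12.partB a b α β hP.1 hP.2.1 hP.2.2.1 lam hlam d
end

section
/- For any tuple P of osculating paths in an a×b rectangle with boundary point pair (α,β), the total number of vacancies of P equals |λ_{a,b,α,β}| + χ(P), where χ(P) is the number of osculations of P. Consequently the vacancy-osculation set Z(P) = N(P) ∪ X(P) satisfies |Z(P)| = |λ_{a,b,α,β}| + 2χ(P). -/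
/-- A finite downward-closed set of naturals is an initial segment. -/
lemma dc_eq_Iio {S : Set ℕ} (hfin : S.Finite)
    (hdc : ∀ ⦃i j : ℕ⦄, j ≤ i → i ∈ S → j ∈ S) :
    ∀ i : ℕ, i ∈ S ↔ i < S.ncard := by
  intro i
  constructor
  · intro hi
    have hsub : Set.Iic i ⊆ S := fun x hx => hdc hx hi
    have : (Set.Iic i).ncard ≤ S.ncard := Set.ncard_le_ncard hsub hfin
    rwa [← Finset.coe_Iic, Set.ncard_coe_finset, Nat.card_Iic] at this
  · intro hi
    by_contra hmem
    have hsub : S ⊆ Set.Iio i := by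
      intro x hx
      by_contra hxi
      exact hmem (hdc (not_lt.1 hxi) hx)
    have : S.ncard ≤ (Set.Iio i).ncard := Set.ncard_le_ncard hsub (Set.finite_Iio i)
    rw [← Finset.coe_Iio, Set.ncard_coe_finset, Nat.card_Iio] at this
    omega
lemma Ptn.size_eq_sum (l : Ptn) (N : ℕ) (h0 : ∀ k : ℕ, N ≤ k → l.parts k = 0) :
    l.size = ∑ i ∈ Finset.range N, l.parts i := by
  classical
  have hset : l.ycells = ↑((Finset.range N).biUnion
      (fun i => (Finset.Icc 1 (l.parts i)).image (fun j => (i + 1, j)))) := by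
    ext ⟨p1, p2⟩
    simp only [Ptn.ycells, Set.mem_setOf_eq, Finset.coe_biUnion, Set.mem_iUnion,
      Finset.mem_coe, Finset.mem_image, Finset.mem_Icc, Finset.mem_range]
    constructor
    · rintro ⟨h1, h2, h3⟩
      refine ⟨p1 - 1, ?_, p2, ⟨h2, h3⟩, by rw [Nat.sub_add_cancel h1]⟩
      by_contra hN
      have := h0 (p1 - 1) (by omega)
      omega
    · rintro ⟨i, hi, j, ⟨hj1, hj2⟩, heq⟩
      injection heq with e1 e2
      subst e1; subst e2
      exact ⟨by omega, hj1, by simpa using hj2⟩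
  rw [Ptn.size, hset, Set.ncard_coe_finset]
  rw [Finset.card_biUnion]
  · refine Finset.sum_congr rfl fun i _ => ?_
    rw [Finset.card_image_of_injective _ (fun x y h => by injection h), Nat.card_Icc]; omega
  · intro x hx y hy hxy
    simp only [Finset.disjoint_left, Finset.mem_image]
    rintro ⟨p1, p2⟩ ⟨j, hj, heq⟩ ⟨j', hj', heq'⟩
    injection heq with e1 e2; injection heq' with e1' e2'
    omega
lemma frobenius_facts (mu : Ptn) (a b r : ℕ) (g d : ℕ → ℕ) (hF : IsFrobenius mu r g d)
    (hg : 0 < r → g 0 + 1 ≤ b) (hd : 0 < r → d 0 + 1 ≤ a) :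
    (∀ i : ℕ, mu.parts i ≤ b) ∧ (∀ i : ℕ, a ≤ i → mu.parts i = 0) ∧
    ∑ i ∈ Finset.range a, mu.parts i = ∑ i ∈ Finset.range r, (g i + d i + 1) := by
  classical
  obtain ⟨N, hN⟩ := mu.finite
  have hant : ∀ m n : ℕ, m ≤ n → mu.parts n ≤ mu.parts m := mu.antitone
  -- rank set
  have hRk : ∀ i : ℕ, i < mu.parts i ↔ i < r := by
    have hfin : {i : ℕ | i < mu.parts i}.Finite := by
      apply Set.Finite.subset (Set.finite_Iio N)
      intro i hi
      simp only [Set.mem_setOf_eq] at hi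
      simp only [Set.mem_Iio]
      by_contra h
      have := hN i (by omega)
      omega
    have := dc_eq_Iio hfin (fun i j hji hi => by
      simp only [Set.mem_setOf_eq] at *
      have := hant j i hji
      omega)
    intro i
    have h := this i
    simp only [Set.mem_setOf_eq] at h
    have hr2 : {i : ℕ | i < mu.parts i}.ncard = r := hF.1
    rw [hr2] at h
    exact h
  -- conj sets
  have hS : ∀ j i : ℕ, j < mu.parts i ↔ i < mu.conj j := by
    intro j
    have hfin : {i : ℕ | j < mu.parts i}.Finite := by
      apply Set.Finite.subset (Set.finite_Iio N)
      intro i hi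
      simp only [Set.mem_setOf_eq] at hi
      simp only [Set.mem_Iio]
      by_contra h
      have := hN i (by omega)
      omega
    have := dc_eq_Iio hfin (fun i i' hji hi => by
      simp only [Set.mem_setOf_eq] at *
      have := hant i' i hji
      omega)
    intro i
    have h := this i
    simp only [Set.mem_setOf_eq] at h
    have hc : {i : ℕ | j < mu.parts i}.ncard = mu.conj j := rfl
    rw [hc] at h
    exact h
  have hpr : ∀ i : ℕ, i < r → mu.parts i = g i + i + 1 := hF.2.1
  have hcr : ∀ i : ℕ, i < r → mu.conj i = d i + i + 1 := hF.2.2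
  have hb0 : mu.parts 0 ≤ b := by
    rcases Nat.eq_zero_or_pos r with hr | hr
    · have := (hRk 0).not.2 (by omega); omega
    · have := hpr 0 hr; have := hg hr; omega
  have hble : ∀ i : ℕ, mu.parts i ≤ b := fun i => le_trans (hant 0 i (Nat.zero_le i)) hb0
  have ha0 : mu.conj 0 ≤ a := by
    rcases Nat.eq_zero_or_pos r with hr | hr
    · have h1 := (hRk 0).not.2 (by omega)
      have h2 := (hS 0 0).not.1 (by omega)
      omega
    · have := hcr 0 hr; have := hd hr; omega
  have hconj_le : ∀ j : ℕ, mu.conj j ≤ mu.conj 0 := by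
    intro j
    by_contra h
    have h1 : (mu.conj 0) < mu.conj j := by omega
    have h2 := (hS j (mu.conj 0)).2 h1
    have h3 := (hS 0 (mu.conj 0)).1 (by omega)
    omega
  have hzero : ∀ i : ℕ, a ≤ i → mu.parts i = 0 := by
    intro i hi
    have := (hS 0 i).not.2 (by omega)
    omega
  have hra : r ≤ a := by
    rcases Nat.eq_zero_or_pos r with hr | hr
    · omega
    · have h1 := (hRk (r - 1)).2 (by omega)
      have h2 := (hS 0 (r - 1)).1 (by omega)
      omega
  have hrb : r ≤ b := by
    rcases Nat.eq_zero_or_pos r with hr | hr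
    · omega
    · have h1 := (hRk (r - 1)).2 (by omega)
      have h2 := hant 0 (r - 1) (Nat.zero_le _)
      omega
  refine ⟨hble, hzero, ?_⟩
  -- main computation
  have key : ∀ i : ℕ, mu.parts i = ∑ j ∈ Finset.range b, ite (j < mu.parts i) 1 0 := by
    intro i
    rw [← Finset.card_filter]
    have : (Finset.range b).filter (fun j => j < mu.parts i) = Finset.range (mu.parts i) := by
      ext j
      simp only [Finset.mem_filter, Finset.mem_range]
      have := hble i
      omega
    rw [this, Finset.card_range]
  calc ∑ i ∈ Finset.range a, mu.parts i
      = ∑ i ∈ Finset.range a, ∑ j ∈ Finset.range b, ite (j < mu.parts i) 1 0 :=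
        Finset.sum_congr rfl fun i _ => key i
    _ = ∑ i ∈ Finset.range a, ∑ j ∈ Finset.range b,
          (ite (j < mu.parts i ∧ i ≤ j) 1 0 + ite (j < mu.parts i ∧ j < i) 1 0) := by
        refine Finset.sum_congr rfl fun i _ => Finset.sum_congr rfl fun j _ => ?_
        split_ifs <;> omega
    _ = (∑ i ∈ Finset.range a, ∑ j ∈ Finset.range b, ite (j < mu.parts i ∧ i ≤ j) 1 0)
        + ∑ i ∈ Finset.range a, ∑ j ∈ Finset.range b, ite (j < mu.parts i ∧ j < i) 1 0 := by
        rw [← Finset.sum_add_distrib]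
        exact Finset.sum_congr rfl fun i _ => Finset.sum_add_distrib
    _ = (∑ i ∈ Finset.range r, (g i + 1)) + ∑ j ∈ Finset.range r, d j := by
        congr 1
        · -- arms
          have h1 : ∀ i : ℕ, ∑ j ∈ Finset.range b, ite (j < mu.parts i ∧ i ≤ j) 1 0
              = mu.parts i - i := by
            intro i
            rw [← Finset.card_filter]
            have : (Finset.range b).filter (fun j => j < mu.parts i ∧ i ≤ j)
                = Finset.Ico i (mu.parts i) := by
              ext j
              simp only [Finset.mem_filter, Finset.mem_range, Finset.mem_Ico]
              have := hble i
              omega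
            rw [this, Nat.card_Ico]
          rw [Finset.sum_congr rfl fun i _ => h1 i]
          rw [← Finset.sum_subset (Finset.range_subset_range.2 hra)
            (fun i _ hi => by
              simp only [Finset.mem_range] at hi
              have := (hRk i).not.2 (by omega)
              omega)]
          refine Finset.sum_congr rfl fun i hi => ?_
          simp only [Finset.mem_range] at hi
          rw [hpr i hi]
          omega
        · -- legs
          rw [Finset.sum_comm]
          have h1 : ∀ j : ℕ, j < r → ∑ i ∈ Finset.range a, ite (j < mu.parts i ∧ j < i) 1 0
              = d j := by
            intro j hj
            rw [← Finset.card_filter]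
            have : (Finset.range a).filter (fun i => j < mu.parts i ∧ j < i)
                = Finset.Ico (j + 1) (mu.conj j) := by
              ext i
              simp only [Finset.mem_filter, Finset.mem_range, Finset.mem_Ico]
              have h2 := hS j i
              have h3 := hconj_le j
              omega
            rw [this, Nat.card_Ico, hcr j hj]
            omega
          have h0 : ∀ j : ℕ, r ≤ j → ∑ i ∈ Finset.range a, ite (j < mu.parts i ∧ j < i) 1 0
              = 0 := by
            intro j hj
            apply Finset.sum_eq_zero
            intro i _
            have : ¬ (j < mu.parts i ∧ j < i) := by
              rintro ⟨c1, c2⟩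
              have := hant j i (by omega)
              have := (hRk j).1 (by omega)
              omega
            simp [this]
          rw [← Finset.sum_subset (Finset.range_subset_range.2 hrb)
            (fun j _ hj => by
              simp only [Finset.mem_range] at hj
              exact h0 j (by omega))]
          refine Finset.sum_congr rfl fun j hj => ?_
          simp only [Finset.mem_range] at hj
          exact h1 j hj
    _ = ∑ i ∈ Finset.range r, (g i + d i + 1) := by
        rw [← Finset.sum_add_distrib]
        exact Finset.sum_congr rfl fun i _ => by omega
lemma sort_getD_mem (s : Finset ℕ) (i : ℕ) (h : i < s.card) : (s.sort (· ≤ ·)).getD i 0 ∈ s := by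
  have hl : i < (s.sort (· ≤ ·)).length := by rwa [Finset.length_sort]
  rw [List.getD_eq_getElem _ _ hl]
  exact (Finset.mem_sort _).1 (List.getElem_mem _)

lemma sort_getD_mono (s : Finset ℕ) (i j : ℕ) (hij : i ≤ j) (h : j < s.card) :
    (s.sort (· ≤ ·)).getD i 0 ≤ (s.sort (· ≤ ·)).getD j 0 := by
  have hl : j < (s.sort (· ≤ ·)).length := by rwa [Finset.length_sort]
  have hl' : i < (s.sort (· ≤ ·)).length := by omega
  rw [List.getD_eq_getElem _ _ hl, List.getD_eq_getElem _ _ hl']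
  exact List.Pairwise.rel_get_of_le (Finset.pairwise_sort s (· ≤ ·)) (by exact hij)

lemma bdry_size (a b : ℕ) (α β : Finset ℕ) (hα : α ⊆ Finset.Icc 1 a) (hβ : β ⊆ Finset.Icc 1 b)
    (hcard : α.card = β.card) (lam : Ptn) (hlam : IsBdryPtn a b α β lam) :
    lam.size + ∑ k ∈ Finset.range α.card,
        ((a - (α.sort (· ≤ ·)).getD k 0) + (b - (β.sort (· ≤ ·)).getD k 0) + 1) = a * b := by
  obtain ⟨mu, hF, hC⟩ := hlam
  set r := α.card with hr
  have hg : 0 < r → (b - (β.sort (· ≤ ·)).getD 0 0) + 1 ≤ b := by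
    intro h0
    have hm := sort_getD_mem β 0 (by omega)
    have := hβ hm
    simp only [Finset.mem_Icc] at this
    omega
  have hd : 0 < r → (a - (α.sort (· ≤ ·)).getD 0 0) + 1 ≤ a := by
    intro h0
    have hm := sort_getD_mem α 0 (by omega)
    have := hα hm
    simp only [Finset.mem_Icc] at this
    omega
  obtain ⟨hble, hzero, hsum⟩ := frobenius_facts mu a b r _ _ hF hg hd
  have hsize : lam.size = ∑ k ∈ Finset.range a, lam.parts k := by
    apply Ptn.size_eq_sum
    intro k hk
    rw [hC k, if_neg (by omega)]
  have hstep : ∑ k ∈ Finset.range a, lam.parts k = ∑ k ∈ Finset.range a, (b - mu.parts k) := by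
    rw [← Finset.sum_range_reflect (fun k => b - mu.parts k) a]
    refine Finset.sum_congr rfl fun k hk => ?_
    simp only [Finset.mem_range] at hk
    rw [hC k, if_pos hk]
  have htot : lam.size + ∑ k ∈ Finset.range a, mu.parts k = a * b := by
    rw [hsize, hstep, ← Finset.sum_add_distrib]
    rw [Finset.sum_congr rfl (fun k _ => by have := hble k; omega : ∀ k ∈ Finset.range a,
      b - mu.parts k + mu.parts k = b)]
    rw [Finset.sum_const, Finset.card_range, smul_eq_mul]
  rw [hsum] at htot
  rw [← htot]
  congr 1
  exact Finset.sum_congr rfl fun k _ => by omega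
section PathLemmas

variable {p : List (ℤ × ℤ)} {s t : ℤ × ℤ}

lemma IsPathFT.ne_nil (h : IsPathFT p s t) : p ≠ [] := by
  intro e
  subst e
  simp [IsPathFT] at h

lemma IsPathFT.len_pos (h : IsPathFT p s t) : 0 < p.length :=
  List.length_pos_iff.2 h.ne_nil

lemma IsPathFT.getD_zero (h : IsPathFT p s t) : p.getD 0 (0, 0) = s := by
  have h1 := h.1
  rw [List.head?_eq_head h.ne_nil] at h1
  rw [List.getD_eq_getElem _ _ h.len_pos, ← List.head_eq_getElem h.ne_nil]
  exact Option.some_injective _ h1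

lemma IsPathFT.getD_last (h : IsPathFT p s t) : p.getD (p.length - 1) (0, 0) = t := by
  have h1 := h.2.1
  rw [List.getLast?_eq_getLast h.ne_nil] at h1
  rw [List.getD_eq_getElem _ _ (by have := h.len_pos; omega), ← List.getLast_eq_getElem h.ne_nil]
  exact Option.some_injective _ h1

lemma IsPathFT.step (h : IsPathFT p s t) {l : ℕ} (hl : l + 1 < p.length) :
    IsStep (p.getD l (0, 0)) (p.getD (l + 1) (0, 0)) := by
  rw [List.getD_eq_getElem _ _ (by omega), List.getD_eq_getElem _ _ hl]
  have := List.isChain_iff_getElem.1 h.2.2 l (by omega)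
  simpa [List.get_eq_getElem] using this

lemma IsPathFT.content (h : IsPathFT p s t) {l : ℕ} (hl : l < p.length) :
    (p.getD l (0, 0)).2 - (p.getD l (0, 0)).1 = s.2 - s.1 + l := by
  induction l with
  | zero => rw [h.getD_zero]; simp
  | succ n ih =>
    have hn : n < p.length := by omega
    have ihn := ih hn
    rcases h.step hl with e | e <;> rw [e] <;> dsimp only <;> push_cast <;> omega
  
lemma IsPathFT.length_eq (h : IsPathFT p s t) :
    (p.length : ℤ) = (t.2 - t.1) - (s.2 - s.1) + 1 := by
  have hc := h.content (l := p.length - 1) (by have := h.len_pos; omega)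
  rw [h.getD_last] at hc
  have := h.len_pos
  push_cast at hc ⊢
  omega

lemma IsPathFT.row_mono (h : IsPathFT p s t) {l l' : ℕ} (hll : l ≤ l') (hl' : l' < p.length) :
    (p.getD l' (0, 0)).1 ≤ (p.getD l (0, 0)).1 := by
  induction l' with
  | zero => have : l = 0 := by omega
            subst this; exact le_refl _
  | succ n ih =>
    rcases Nat.lt_or_ge l (n + 1) with hlt | hge
    · have h1 : (p.getD n (0, 0)).1 ≤ (p.getD l (0, 0)).1 := ih (by omega) (by omega)
      have h2 := h.step hl'
      rcases h2 with e | e <;> rw [e] <;> dsimp only <;> omega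
    · have : l = n + 1 := by omega
      subst this; exact le_refl _

lemma IsPathFT.col_mono (h : IsPathFT p s t) {l l' : ℕ} (hll : l ≤ l') (hl' : l' < p.length) :
    (p.getD l (0, 0)).2 ≤ (p.getD l' (0, 0)).2 := by
  induction l' with
  | zero => have : l = 0 := by omega
            subst this; exact le_refl _
  | succ n ih =>
    rcases Nat.lt_or_ge l (n + 1) with hlt | hge
    · have h1 : (p.getD l (0, 0)).2 ≤ (p.getD n (0, 0)).2 := ih (by omega) (by omega)
      have h2 := h.step hl'
      rcases h2 with e | e <;> rw [e] <;> dsimp only <;> omega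
    · have : l = n + 1 := by omega
      subst this; exact le_refl _

lemma IsPathFT.row_bounds (h : IsPathFT p s t) {l : ℕ} (hl : l < p.length) :
    t.1 ≤ (p.getD l (0, 0)).1 ∧ (p.getD l (0, 0)).1 ≤ s.1 := by
  constructor
  · have := h.row_mono (l := l) (l' := p.length - 1) (by omega) (by have := h.len_pos; omega)
    rwa [h.getD_last] at this
  · have := h.row_mono (l := 0) (l' := l) (by omega) hl
    rwa [h.getD_zero] at this

lemma IsPathFT.col_bounds (h : IsPathFT p s t) {l : ℕ} (hl : l < p.length) :
    s.2 ≤ (p.getD l (0, 0)).2 ∧ (p.getD l (0, 0)).2 ≤ t.2 := by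
  constructor
  · have := h.col_mono (l := 0) (l' := l) (by omega) hl
    rwa [h.getD_zero] at this
  · have := h.col_mono (l := l) (l' := p.length - 1) (by omega) (by have := h.len_pos; omega)
    rwa [h.getD_last] at this

lemma IsPathFT.mem_index (h : IsPathFT p s t) {v : ℤ × ℤ} (hv : v ∈ p) :
    ∃ l : ℕ, l < p.length ∧ p.getD l (0, 0) = v ∧ (l : ℤ) = (v.2 - v.1) - (s.2 - s.1) := by
  obtain ⟨⟨l, hl⟩, he⟩ := List.mem_iff_get.1 hv
  refine ⟨l, hl, ?_, ?_⟩
  · rw [List.getD_eq_getElem _ _ hl]; exact he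
  · have hc := h.content hl
    rw [List.getD_eq_getElem _ _ hl] at hc
    simp only [List.get_eq_getElem] at he
    rw [he] at hc
    omega

lemma IsPathFT.nodup (h : IsPathFT p s t) : p.Nodup := by
  rw [List.nodup_iff_injective_get]
  rintro ⟨l, hl⟩ ⟨l', hl'⟩ he
  have h1 := h.content hl
  have h2 := h.content hl'
  rw [List.getD_eq_getElem _ _ hl] at h1
  rw [List.getD_eq_getElem _ _ hl'] at h2
  simp only [List.get_eq_getElem] at he
  rw [he] at h1
  have : (l : ℤ) = l' := by omega
  simp only [Fin.mk.injEq]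
  omega

end PathLemmas
lemma osc_row_le {p q : List (ℤ × ℤ)} {A B BP BQ CP CQ : ℤ}
    (hp : IsPathFT p (A, BP) (CP, B)) (hq : IsPathFT q (A, BQ) (CQ, B))
    (hBB : BP ≤ BQ) (hosc : Osc p q) :
    ∀ lq lp : ℕ, lq < q.length → lp < p.length → (lp : ℤ) = lq + (BQ - BP) →
      (p.getD lp (0, 0)).1 ≤ (q.getD lq (0, 0)).1 := by
  intro lq
  induction lq with
  | zero =>
    intro lp hq' hp' heq
    have h1 := hq.getD_zero
    rw [h1]
    exact (hp.row_bounds hp').2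
  | succ n ih =>
    intro lp hq' hp' heq
    have hlp1 : 1 ≤ lp := by omega
    set lp0 := lp - 1 with hlp0def
    have hlp0 : (lp0 : ℤ) = n + (BQ - BP) := by push_cast; omega
    have hlp0len : lp0 < p.length := by omega
    have hIH := ih lp0 (by omega) hlp0len hlp0
    rcases lt_or_eq_of_le hIH with hlt | heqr
    · -- strict case
      have h1 : (p.getD lp (0, 0)).1 ≤ (p.getD lp0 (0, 0)).1 :=
        hp.row_mono (by omega) hp'
      have h2 := hq.step hq'
      rcases h2 with e | e <;> rw [e] <;> dsimp only <;> omega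
    · -- equal rows: shared point
      have hcp := hp.content hlp0len
      have hcq := hq.content (l := n) (by omega)
      have hcols : (p.getD lp0 (0, 0)).2 = (q.getD n (0, 0)).2 := by
        dsimp only at hcp hcq
        omega
      have he : p.getD lp0 (0, 0) = q.getD n (0, 0) := Prod.ext (by omega) hcols
      obtain ⟨h0l, hl1, hprev, hnext, hqprev, hqnext⟩ := hosc lp0 n hlp0len (by omega) he
      rw [show lp0 + 1 = lp by omega] at hnext
      rw [hnext, hqnext hq']
      dsimp only
      omega

/-- `|N(P)| = |λ_{a,b,α,β}| + χ(P)` and `|Z(P)| = |λ_{a,b,α,β}| + 2χ(P)`. -/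
theorem statement13 (a b : ℕ) (ha : 0 < a) (hb : 0 < b) (α β : Finset ℕ)
    (P : List (List (ℤ × ℤ))) (hP : IsOscTuple a b α β P)
    (lam : Ptn) (hlam : IsBdryPtn a b α β lam) :
    {v ∈ rectZ a b | passCount P v = 0}.ncard
        = lam.size + {v ∈ rectZ a b | passCount P v = 2}.ncard ∧
      (Zset a b P).ncard = lam.size + 2 * {v ∈ rectZ a b | passCount P v = 2}.ncard := by
  classical
  obtain ⟨hα, hβ, hcard, hlen, hpaths, hoscs⟩ := hP
  set n := P.length with hn
  set αk : ℕ → ℕ := fun k => (α.sort (· ≤ ·)).getD k 0 with hαk_def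
  set βk : ℕ → ℕ := fun k => (β.sort (· ≤ ·)).getD k 0 with hβk_def
  have hαb : ∀ k : ℕ, k < n → 1 ≤ αk k ∧ αk k ≤ a := by
    intro k hk
    have := hα (sort_getD_mem α k (by omega))
    simpa [Finset.mem_Icc, hαk_def] using this
  have hβb : ∀ k : ℕ, k < n → 1 ≤ βk k ∧ βk k ≤ b := by
    intro k hk
    have := hβ (sort_getD_mem β k (by omega))
    simpa [Finset.mem_Icc, hβk_def] using this
  have hαmono : ∀ k k' : ℕ, k ≤ k' → k' < n → αk k ≤ αk k' := by
    intro k k' hkk hk'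
    exact sort_getD_mono α k k' hkk (by omega)
  have hβmono : ∀ k k' : ℕ, k ≤ k' → k' < n → βk k ≤ βk k' := by
    intro k k' hkk hk'
    exact sort_getD_mono β k k' hkk (by omega)
  have hpathk : ∀ k : ℕ, k < n →
      IsPathFT (P.getD k []) ((a : ℤ), (βk k : ℤ)) ((αk k : ℤ), (b : ℤ)) :=
    fun k hk => hpaths k hk
  -- lengths of paths
  have hlenkZ : ∀ k : ℕ, k < n →
      ((P.getD k []).length : ℤ) = ((b : ℤ) - αk k) - ((βk k : ℤ) - a) + 1 := by
    intro k hk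
    simpa using (hpathk k hk).length_eq
  have hlenk : ∀ k : ℕ, k < n →
      (P.getD k []).length = (a - αk k) + (b - βk k) + 1 := by
    intro k hk
    have h1 := hlenkZ k hk
    have h2 := hαb k hk
    have h3 := hβb k hk
    omega
  -- the rectangle as a finset
  set R : Finset (ℤ × ℤ) := Finset.Icc ((1 : ℤ), (1 : ℤ)) ((a : ℤ), (b : ℤ)) with hR_def
  have hmemR : ∀ v : ℤ × ℤ, v ∈ R ↔ v ∈ rectZ a b := by
    intro v
    simp [hR_def, Finset.mem_Icc, Prod.le_def, rectZ, Set.mem_setOf_eq]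
    tauto
  have hRcard : R.card = a * b := by
    rw [hR_def, Finset.card_Icc_prod]
    simp only [Int.card_Icc]
    have e1 : ((a : ℤ) + 1 - 1) = (a : ℤ) := by ring
    have e2 : ((b : ℤ) + 1 - 1) = (b : ℤ) := by ring
    rw [e1, e2, Int.toNat_natCast, Int.toNat_natCast]
  -- path points are in the rectangle
  have hvrect : ∀ k : ℕ, k < n → ∀ v : ℤ × ℤ, v ∈ P.getD k [] → v ∈ R := by
    intro k hk v hv
    obtain ⟨l, hl, he, -⟩ := (hpathk k hk).mem_index hv
    have h1 := (hpathk k hk).row_bounds hl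
    have h2 := (hpathk k hk).col_bounds hl
    rw [he] at h1 h2
    have h3 := hαb k hk
    have h4 := hβb k hk
    rw [hmemR]
    refine ⟨?_, ?_, ?_, ?_⟩ <;> dsimp only at h1 h2 <;>
      [omega; omega; omega; omega]
  -- passCount as a finset card
  set F : ℤ × ℤ → Finset ℕ := fun v => (Finset.range n).filter (fun k => v ∈ P.getD k []) with hF_def
  have hpcF : ∀ v : ℤ × ℤ, passCount P v = (F v).card := by
    intro v
    rw [passCount]
    have : {k : ℕ | k < P.length ∧ v ∈ P.getD k []} = ↑(F v) := by
      ext k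
      simp [hF_def, Finset.mem_filter, Finset.mem_range, hn]
    rw [this, Set.ncard_coe_finset]
  -- two paths through the same point have adjacent indices
  have hclose : ∀ v : ℤ × ℤ, ∀ k k' : ℕ, k < k' → k' < n →
      v ∈ P.getD k [] → v ∈ P.getD k' [] → k' ≤ k + 1 := by
    intro v k k' hkk' hk'n hv hv'
    by_contra hfar
    have hk2 : k + 2 ≤ k' := by omega
    set d : ℤ := v.2 - v.1 with hd_def
    obtain ⟨l', hl'len, he', hl'eq⟩ := (hpathk k' hk'n).mem_index hv'
    dsimp only at hl'eq
    have hl'nonneg : (0 : ℤ) ≤ d + a - βk k' := by omega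
    have hdub : d ≤ (b : ℤ) - αk k' := by
      have := hlenkZ k' hk'n
      omega
    set L : ℕ → ℕ := fun j => (d + a - βk j).toNat with hL_def
    have hLval : ∀ j : ℕ, j ≤ k' → (L j : ℤ) = d + a - βk j := by
      intro j hj
      have hβj : (βk j : ℤ) ≤ βk k' := by exact_mod_cast hβmono j k' hj hk'n
      rw [hL_def]
      dsimp only
      rw [Int.toNat_of_nonneg (by omega)]
    have hLlen : ∀ j : ℕ, j ≤ k' → L j < (P.getD j []).length := by
      intro j hj
      have h1 := hlenkZ j (by omega)
      have h2 := hLval j hj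
      have hαj : (αk j : ℤ) ≤ αk k' := by exact_mod_cast hαmono j k' hj hk'n
      omega
    have hrowstep : ∀ j : ℕ, j + 1 ≤ k' →
        ((P.getD j []).getD (L j) (0, 0)).1 ≤ ((P.getD (j + 1) []).getD (L (j + 1)) (0, 0)).1 := by
      intro j hj
      refine osc_row_le (hpathk j (by omega)) (hpathk (j + 1) (by omega))
        (by exact_mod_cast hβmono j (j + 1) (by omega) (by omega))
        (hoscs j (by omega)) (L (j + 1)) (L j) (hLlen (j + 1) hj) (hLlen j (by omega)) ?_
      have h1 := hLval j (by omega)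
      have h2 := hLval (j + 1) hj
      omega
    have hrowmono : ∀ j j' : ℕ, j ≤ j' → j' ≤ k' →
        ((P.getD j []).getD (L j) (0, 0)).1 ≤ ((P.getD j' []).getD (L j') (0, 0)).1 := by
      intro j j' hjj' hj'k
      induction j' with
      | zero =>
        have : j = 0 := by omega
        subst this; exact le_refl _
      | succ m ih =>
        rcases Nat.lt_or_ge j (m + 1) with hlt | hge
        · exact le_trans (ih (by omega) (by omega)) (hrowstep m hj'k)
        · have : j = m + 1 := by omega
          subst this; exact le_refl _
    have hend : ∀ j : ℕ, j ≤ k' → v ∈ P.getD j [] →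
        (P.getD j []).getD (L j) (0, 0) = v := by
      intro j hj hvj
      obtain ⟨l, hllen, he, hleq⟩ := (hpathk j (by omega)).mem_index hvj
      dsimp only at hleq
      have h2 := hLval j hj
      have : l = L j := by omega
      rw [← this]; exact he
    have ek := hend k (by omega) hv
    have ek' := hend k' (le_refl _) hv'
    have hrow : ∀ j : ℕ, k ≤ j → j ≤ k' → ((P.getD j []).getD (L j) (0, 0)).1 = v.1 := by
      intro j h1 h2
      have ha1 := hrowmono k j h1 (by omega)
      have ha2 := hrowmono j k' h2 (le_refl _)
      rw [ek] at ha1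
      rw [ek'] at ha2
      omega
    have hpt : ∀ j : ℕ, k ≤ j → j ≤ k' → (P.getD j []).getD (L j) (0, 0) = v := by
      intro j h1 h2
      have hc := (hpathk j (by omega)).content (hLlen j h2)
      have hr := hrow j h1 h2
      have hLv := hLval j h2
      dsimp only at hc
      refine Prod.ext hr ?_
      omega
    have e1 := hpt k (le_refl _) (by omega)
    have e2 := hpt (k + 1) (by omega) (by omega)
    have e3 := hpt (k + 2) (by omega) (by omega)
    -- osculation contradictions
    have hosc2 := hoscs (k + 1) (by omega) (L (k + 1)) (L (k + 2))
      (hLlen (k + 1) (by omega)) (hLlen (k + 2) (by omega)) (e2.trans e3.symm)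
    obtain ⟨h0L, -, hprev2, -, -, -⟩ := hosc2
    have hosc1 := hoscs k (by omega) (L k) (L (k + 1))
      (hLlen k (by omega)) (hLlen (k + 1) (by omega)) (e1.trans e2.symm)
    obtain ⟨-, -, -, -, hqprev, -⟩ := hosc1
    have hq1 := hqprev h0L
    rw [e2] at hprev2
    rw [e1] at hq1
    rw [hprev2] at hq1
    have := congrArg Prod.fst hq1
    dsimp only at this
    omega
  -- passCount is at most 2
  have hpc2 : ∀ v : ℤ × ℤ, passCount P v ≤ 2 := by
    intro v
    rw [hpcF]
    by_contra hgt
    have h3 : 2 < (F v).card := by omega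
    obtain ⟨x, hx, y, hy, z, hz, hxy, hxz, hyz⟩ := Finset.two_lt_card.1 h3
    have hmem : ∀ u : ℕ, u ∈ F v → u < n ∧ v ∈ P.getD u [] := by
      intro u hu
      simpa [hF_def, Finset.mem_filter, Finset.mem_range] using hu
    have key : ∀ u w : ℕ, u ∈ F v → w ∈ F v → w ≤ u + 1 := by
      intro u w hu hw
      rcases Nat.lt_or_ge u w with hlt | hge
      · exact hclose v u w hlt (hmem w hw).1 (hmem u hu).2 (hmem w hw).2
      · omega
    have k1 := key x y hx hy
    have k2 := key y x hy hx
    have k3 := key x z hx hz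
    have k4 := key z x hz hx
    have k5 := key y z hy hz
    have k6 := key z y hz hy
    omega
  -- sum of passCounts over the rectangle
  have hsumpc : ∑ v ∈ R, passCount P v
      = ∑ k ∈ Finset.range n, ((a - αk k) + (b - βk k) + 1) := by
    have h1 : ∀ v : ℤ × ℤ, passCount P v = ∑ k ∈ Finset.range n, ite (v ∈ P.getD k []) 1 0 := by
      intro v
      rw [hpcF, hF_def]
      exact Finset.card_filter _ _
    rw [Finset.sum_congr rfl fun v _ => h1 v, Finset.sum_comm]
    refine Finset.sum_congr rfl fun k hk => ?_
    simp only [Finset.mem_range] at hk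
    rw [← Finset.card_filter]
    have h2 : R.filter (fun v => v ∈ P.getD k []) = (P.getD k []).toFinset := by
      ext v
      simp only [Finset.mem_filter, List.mem_toFinset]
      exact ⟨fun h => h.2, fun h => ⟨hvrect k hk v h, h⟩⟩
    rw [h2, List.toFinset_card_of_nodup (hpathk k hk).nodup]
    exact hlenk k hk
  -- partition size
  have hlamsum : lam.size + ∑ k ∈ Finset.range n, ((a - αk k) + (b - βk k) + 1) = a * b := by
    have := bdry_size a b α β hα hβ hcard lam hlam
    rw [← hlen] at this
    exact this
  -- cardinalities
  set c0 : ℕ := (R.filter (fun v => passCount P v = 0)).card with hc0_def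
  set c1 : ℕ := (R.filter (fun v => passCount P v = 1)).card with hc1_def
  set c2 : ℕ := (R.filter (fun v => passCount P v = 2)).card with hc2_def
  have hpart : c0 + c1 + c2 = a * b := by
    rw [hc0_def, hc1_def, hc2_def, ← hRcard]
    rw [Finset.card_filter, Finset.card_filter, Finset.card_filter]
    rw [← Finset.sum_add_distrib, ← Finset.sum_add_distrib]
    rw [Finset.card_eq_sum_ones R]
    refine Finset.sum_congr rfl fun v _ => ?_
    have := hpc2 v
    split_ifs <;> omega
  have hsum2 : ∑ v ∈ R, passCount P v = c1 + 2 * c2 := by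
    rw [hc1_def, hc2_def, Finset.card_filter, Finset.card_filter, Finset.mul_sum,
      ← Finset.sum_add_distrib]
    refine Finset.sum_congr rfl fun v _ => ?_
    have := hpc2 v
    split_ifs <;> omega
  -- identify the ncard sets with the filters
  have hset0 : {v ∈ rectZ a b | passCount P v = 0}.ncard = c0 := by
    have : {v ∈ rectZ a b | passCount P v = 0} = ↑(R.filter (fun v => passCount P v = 0)) := by
      ext v
      simp only [Set.mem_setOf_eq, Finset.coe_filter, hmemR]
    rw [this, Set.ncard_coe_finset, hc0_def]
  have hset2 : {v ∈ rectZ a b | passCount P v = 2}.ncard = c2 := by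
    have : {v ∈ rectZ a b | passCount P v = 2} = ↑(R.filter (fun v => passCount P v = 2)) := by
      ext v
      simp only [Set.mem_setOf_eq, Finset.coe_filter, hmemR]
    rw [this, Set.ncard_coe_finset, hc2_def]
  have hsetZ : (Zset a b P).ncard = c0 + c2 := by
    have h1 : Zset a b P = ↑(R.filter (fun v => passCount P v = 0 ∨ passCount P v = 2)) := by
      ext v
      simp only [Zset, Set.mem_setOf_eq, Finset.coe_filter, hmemR]
    rw [h1, Set.ncard_coe_finset, Finset.filter_or, Finset.card_union_of_disjoint]
    rw [Finset.disjoint_left]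
    intro v hv1 hv2
    simp only [Finset.mem_filter] at hv1 hv2
    omega
  have hkey : lam.size + (c1 + 2 * c2) = a * b := by
    rw [← hsum2, hsumpc]
    exact hlamsum
  rw [hset0, hset2, hsetZ]
  omega
end

section
/- Every tuple of osculating paths in [1,a]×[1,b] is uniquely determined by its vacancy-osculation set: the map P ↦ Z(P) = N(P) ∪ X(P) from OP(a,b) to subsets of [1,a]×[1,b] is injective. -/
namespace OP14

variable {p : List (ℤ × ℤ)} {s t : ℤ × ℤ}

lemma path_len_pos (hp : IsPathFT p s t) : 0 < p.length := by
  rcases p with _ | ⟨x, l⟩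
  · exact absurd hp.1 (by simp)
  · simp

lemma path_ne_nil (hp : IsPathFT p s t) : p ≠ [] :=
  List.length_pos_iff.mp (path_len_pos hp)

lemma path_zero (hp : IsPathFT p s t) : p.getD 0 (0,0) = s := by
  rcases p with _ | ⟨x, l⟩
  · exact absurd hp.1 (by simp)
  · have : x = s := by simpa using hp.1
    simp [this]

lemma path_last (hp : IsPathFT p s t) : p.getD (p.length - 1) (0,0) = t := by
  have hne := path_ne_nil hp
  have h1 := hp.2.1
  rw [List.getLast?_eq_getLast_of_ne_nil hne] at h1
  have h2 : p.getLast hne = t := by simpa using h1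
  rw [List.getD_eq_getElem _ _ (by have := path_len_pos hp; omega)]
  rw [← List.getLast_eq_getElem hne]
  exact h2

lemma path_step (hp : IsPathFT p s t) {l : ℕ} (hl : l + 1 < p.length) :
    IsStep (p.getD l (0,0)) (p.getD (l+1) (0,0)) := by
  have h := hp.2.2
  rw [List.Chain', List.isChain_iff_getElem] at h
  have := h l (by omega)
  rw [List.getD_eq_getElem _ _ (by omega), List.getD_eq_getElem _ _ hl]
  simpa using this

lemma path_step' (hp : IsPathFT p s t) {l : ℕ} (hl : l + 1 < p.length) :
    ((p.getD (l+1) (0,0)).1 = (p.getD l (0,0)).1 ∧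
      (p.getD (l+1) (0,0)).2 = (p.getD l (0,0)).2 + 1) ∨
    ((p.getD (l+1) (0,0)).1 = (p.getD l (0,0)).1 - 1 ∧
      (p.getD (l+1) (0,0)).2 = (p.getD l (0,0)).2) := by
  rcases path_step hp hl with h | h <;> [left; right] <;> rw [h] <;> exact ⟨rfl, rfl⟩

lemma path_diag (hp : IsPathFT p s t) : ∀ l, l < p.length →
    (p.getD l (0,0)).2 - (p.getD l (0,0)).1 = s.2 - s.1 + l := by
  intro l
  induction l with
  | zero => intro _; rw [path_zero hp]; simp
  | succ n ih =>
    intro hl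
    have h1 := ih (by omega)
    rcases path_step' hp hl with ⟨h2, h3⟩ | ⟨h2, h3⟩ <;> rw [h2, h3] <;> push_cast <;> omega

lemma path_mono (hp : IsPathFT p s t) : ∀ l m, l ≤ m → m < p.length →
    (p.getD m (0,0)).1 ≤ (p.getD l (0,0)).1 ∧ (p.getD l (0,0)).2 ≤ (p.getD m (0,0)).2 := by
  intro l m hlm
  induction m with
  | zero => intro _; have : l = 0 := by omega
            subst this; exact ⟨le_refl _, le_refl _⟩
  | succ n ih =>
    intro hm
    rcases Nat.lt_or_ge l (n+1) with hc | hc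
    · have h1 := ih (by omega) (by omega)
      rcases path_step' hp hm with ⟨h2, h3⟩ | ⟨h2, h3⟩ <;> constructor <;> omega
    · have : l = n + 1 := by omega
      subst this; exact ⟨le_refl _, le_refl _⟩

lemma path_bounds (hp : IsPathFT p s t) {l : ℕ} (hl : l < p.length) :
    t.1 ≤ (p.getD l (0,0)).1 ∧ (p.getD l (0,0)).1 ≤ s.1 ∧
    s.2 ≤ (p.getD l (0,0)).2 ∧ (p.getD l (0,0)).2 ≤ t.2 := by
  have h1 := path_mono hp 0 l (by omega) hl
  have h2 := path_mono hp l (p.length - 1) (by omega) (by have := path_len_pos hp; omega)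
  rw [path_zero hp] at h1
  rw [path_last hp] at h2
  exact ⟨h2.1, h1.1, h1.2, h2.2⟩

lemma path_len_eq (hp : IsPathFT p s t) :
    (p.length : ℤ) = (t.2 - t.1) - (s.2 - s.1) + 1 := by
  have h1 := path_diag hp (p.length - 1) (by have := path_len_pos hp; omega)
  rw [path_last hp] at h1
  have := path_len_pos hp
  omega

lemma path_mem (hp : IsPathFT p s t) (v : ℤ × ℤ) :
    v ∈ p ↔ ∃ l, l < p.length ∧ p.getD l (0,0) = v := by
  rw [List.mem_iff_getElem]
  constructor
  · rintro ⟨l, hl, hv⟩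
    exact ⟨l, hl, by rw [List.getD_eq_getElem _ _ hl]; exact hv⟩
  · rintro ⟨l, hl, hv⟩
    exact ⟨l, hl, by rw [← List.getD_eq_getElem _ (0,0) hl]; exact hv⟩

end OP14

namespace OP14

/-- integer value of the `k`-th smallest element of `γ`. -/
def sZ (γ : Finset ℕ) (k : ℕ) : ℤ := ((γ.sort (· ≤ ·)).getD k 0 : ℕ)

/-- entry diagonal of path `k`. -/
def ent (a : ℕ) (β : Finset ℕ) (k : ℕ) : ℤ := sZ β k - a

/-- exit diagonal of path `k`. -/
def ext (b : ℕ) (α : Finset ℕ) (k : ℕ) : ℤ := b - sZ α k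

/-- path `k` is present on diagonal `s`. -/
def pres (a b : ℕ) (α β : Finset ℕ) (P : List (List (ℤ × ℤ))) (k : ℕ) (s : ℤ) : Prop :=
  k < P.length ∧ ent a β k ≤ s ∧ s ≤ ext b α k

/-- the row of path `k` on diagonal `s`. -/
def row (a : ℕ) (β : Finset ℕ) (P : List (List (ℤ × ℤ))) (k : ℕ) (s : ℤ) : ℤ :=
  ((P.getD k []).getD (s - ent a β k).toNat (0, 0)).1

variable {a b : ℕ} {α β : Finset ℕ} {P : List (List (ℤ × ℤ))}

lemma tuple_path (h : IsOscTuple a b α β P) {k : ℕ} (hk : k < P.length) :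
    IsPathFT (P.getD k []) ((a : ℤ), sZ β k) (sZ α k, (b : ℤ)) :=
  h.2.2.2.2.1 k hk

lemma card_α (h : IsOscTuple a b α β P) : α.card = P.length := (h.2.2.2.1).symm

lemma card_β (h : IsOscTuple a b α β P) : β.card = P.length :=
  h.2.2.1 ▸ card_α h

lemma sZ_mem {γ : Finset ℕ} {c k : ℕ} (hγ : γ ⊆ Finset.Icc 1 c) (hk : k < γ.card) :
    1 ≤ sZ γ k ∧ sZ γ k ≤ c := by
  have hlen : (γ.sort (· ≤ ·)).length = γ.card := Finset.length_sort _
  have hmem : (γ.sort (· ≤ ·)).getD k 0 ∈ γ.sort (· ≤ ·) := by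
    rw [List.getD_eq_getElem _ _ (by omega)]
    exact List.getElem_mem _
  rw [Finset.mem_sort] at hmem
  have := hγ hmem
  rw [Finset.mem_Icc] at this
  unfold sZ
  omega

lemma sZ_lt {γ : Finset ℕ} {k j : ℕ} (hkj : k < j) (hj : j < γ.card) :
    sZ γ k < sZ γ j := by
  have hlen : (γ.sort (· ≤ ·)).length = γ.card := Finset.length_sort _
  have hs : List.Pairwise (· < ·) (γ.sort (· ≤ ·)) := (Finset.sortedLT_sort γ).pairwise
  rw [List.pairwise_iff_get] at hs
  have := hs ⟨k, by omega⟩ ⟨j, by omega⟩ (by simpa using hkj)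
  unfold sZ
  rw [List.getD_eq_getElem _ _ (by omega), List.getD_eq_getElem _ _ (by omega)]
  simp only [List.get_eq_getElem] at this
  exact_mod_cast this

lemma βZ_bounds (h : IsOscTuple a b α β P) {k : ℕ} (hk : k < P.length) :
    1 ≤ sZ β k ∧ sZ β k ≤ b := sZ_mem h.2.1 (by rw [card_β h]; exact hk)

lemma αZ_bounds (h : IsOscTuple a b α β P) {k : ℕ} (hk : k < P.length) :
    1 ≤ sZ α k ∧ sZ α k ≤ a := sZ_mem h.1 (by rw [card_α h]; exact hk)

lemma len_path (h : IsOscTuple a b α β P) {k : ℕ} (hk : k < P.length) :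
    ((P.getD k []).length : ℤ) = ext b α k - ent a β k + 1 := by
  have := path_len_eq (tuple_path h hk)
  unfold ext ent
  omega

lemma ent_le_ext (h : IsOscTuple a b α β P) {k : ℕ} (hk : k < P.length) :
    ent a β k ≤ ext b α k := by
  have h1 := len_path h hk
  have h2 := path_len_pos (tuple_path h hk)
  omega

lemma idx_lt (h : IsOscTuple a b α β P) {k : ℕ} {s : ℤ}
    (hs : pres a b α β P k s) : (s - ent a β k).toNat < (P.getD k []).length := by
  have h1 := len_path h hs.1
  have h2 := hs.2.1
  have h3 := hs.2.2
  omega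

lemma point_eq (h : IsOscTuple a b α β P) {k : ℕ} {s : ℤ}
    (hs : pres a b α β P k s) :
    (P.getD k []).getD (s - ent a β k).toNat (0, 0) =
      (row a β P k s, row a β P k s + s) := by
  have hd := path_diag (tuple_path h hs.1) _ (idx_lt h hs)
  have h2 := hs.2.1
  simp only at hd
  have hcol : ((P.getD k []).getD (s - ent a β k).toNat (0, 0)).2 =
      ((P.getD k []).getD (s - ent a β k).toNat (0, 0)).1 + s := by
    unfold ent at *
    omega
  unfold row
  exact Prod.ext rfl hcol

lemma row_bounds (h : IsOscTuple a b α β P) {k : ℕ} {s : ℤ}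
    (hs : pres a b α β P k s) :
    sZ α k ≤ row a β P k s ∧ row a β P k s ≤ a ∧
      sZ β k ≤ row a β P k s + s ∧ row a β P k s + s ≤ b := by
  have hb := path_bounds (tuple_path h hs.1) (idx_lt h hs)
  rw [point_eq h hs] at hb
  exact hb

lemma row_ent (h : IsOscTuple a b α β P) {k : ℕ} (hk : k < P.length) :
    row a β P k (ent a β k) = a := by
  unfold row
  rw [show (ent a β k - ent a β k).toNat = 0 by omega, path_zero (tuple_path h hk)]

lemma row_ext (h : IsOscTuple a b α β P) {k : ℕ} (hk : k < P.length) :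
    row a β P k (ext b α k) = sZ α k := by
  have h1 := len_path h hk
  have h2 := ent_le_ext h hk
  unfold row
  rw [show (ext b α k - ent a β k).toNat = (P.getD k []).length - 1 by omega,
    path_last (tuple_path h hk)]

lemma row_step (h : IsOscTuple a b α β P) {k : ℕ} {s : ℤ}
    (hs : pres a b α β P k s) (hs' : pres a b α β P k (s+1)) :
    row a β P k (s+1) = row a β P k s ∨ row a β P k (s+1) = row a β P k s - 1 := by
  have h1 := hs.2.1
  have hl : (s - ent a β k).toNat + 1 < (P.getD k []).length := by
    have := idx_lt h hs'
    omega
  have := path_step' (tuple_path h hs.1) hl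
  unfold row
  rw [show (s + 1 - ent a β k).toNat = (s - ent a β k).toNat + 1 by omega]
  rcases this with ⟨h2, _⟩ | ⟨h2, _⟩
  · left; exact h2
  · right; omega

lemma mem_path_iff (h : IsOscTuple a b α β P) {k : ℕ} (hk : k < P.length) (v : ℤ × ℤ) :
    v ∈ P.getD k [] ↔
      pres a b α β P k (v.2 - v.1) ∧ row a β P k (v.2 - v.1) = v.1 := by
  constructor
  · intro hv
    rw [path_mem (tuple_path h hk)] at hv
    obtain ⟨l, hl, hvl⟩ := hv
    have hd := path_diag (tuple_path h hk) l hl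
    rw [hvl] at hd
    simp only at hd
    have hlen := len_path h hk
    have hpres : pres a b α β P k (v.2 - v.1) := by
      refine ⟨hk, ?_, ?_⟩ <;> unfold ent ext at * <;> omega
    refine ⟨hpres, ?_⟩
    unfold row
    rw [show (v.2 - v.1 - ent a β k).toNat = l by unfold ent at *; omega, hvl]
  · rintro ⟨hpres, hrow⟩
    rw [path_mem (tuple_path h hk)]
    refine ⟨(v.2 - v.1 - ent a β k).toNat, idx_lt h hpres, ?_⟩
    rw [point_eq h hpres, hrow]
    exact Prod.ext rfl (by simp)

end OP14

namespace OP14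

variable {a b : ℕ} {α β : Finset ℕ} {P : List (List (ℤ × ℤ))}

lemma ent_lt_ent (h : IsOscTuple a b α β P) {k j : ℕ} (hkj : k < j)
    (hj : j < P.length) : ent a β k < ent a β j := by
  have := sZ_lt hkj (by rw [card_β h]; exact hj)
  unfold ent; omega

lemma ext_lt_ext (h : IsOscTuple a b α β P) {k j : ℕ} (hkj : k < j)
    (hj : j < P.length) : ext b α j < ext b α k := by
  have := sZ_lt hkj (by rw [card_α h]; exact hj)
  unfold ext; omega

lemma pres_anti (h : IsOscTuple a b α β P) {k j : ℕ} {s : ℤ} (hkj : k ≤ j)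
    (hs : pres a b α β P j s) : pres a b α β P k s := by
  rcases Nat.eq_or_lt_of_le hkj with rfl | hlt
  · exact hs
  · have h1 := ent_lt_ent h hlt hs.1
    have h2 := ext_lt_ext h hlt hs.1
    have h3 := hs.2.1
    have h4 := hs.2.2
    have h5 := hs.1
    exact ⟨by omega, by omega, by omega⟩

/-- The local forcing at an osculation between paths `k` and `k+1`. -/
lemma osc_local (h : IsOscTuple a b α β P) {k : ℕ} {s : ℤ}
    (hs : pres a b α β P k s) (hs1 : pres a b α β P (k+1) s)
    (he : row a β P (k+1) s = row a β P k s) :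
    ent a β k < s ∧ s < ext b α k ∧
    row a β P k (s-1) = row a β P k s ∧
    row a β P k (s+1) = row a β P k s - 1 ∧
    (ent a β (k+1) < s → row a β P (k+1) (s-1) = row a β P k s + 1) ∧
    (s < ext b α (k+1) → row a β P (k+1) (s+1) = row a β P k s) := by
  have hO := h.2.2.2.2.2 k hs1.1
  set l := (s - ent a β k).toNat with hl_def
  set l' := (s - ent a β (k+1)).toNat with hl'_def
  have hl : l < (P.getD k []).length := idx_lt h hs
  have hl' : l' < (P.getD (k+1) []).length := idx_lt h hs1
  have hpt : (P.getD k []).getD l (0,0) = (row a β P k s, row a β P k s + s) :=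
    point_eq h hs
  have hpt' : (P.getD (k+1) []).getD l' (0,0) = (row a β P k s, row a β P k s + s) := by
    rw [point_eq h hs1, he]
  obtain ⟨h0, h1, h2, h3, h4, h5⟩ := hO l l' hl hl' (by rw [hpt, hpt'])
  rw [hpt] at h2 h3 h4 h5
  have hents : ent a β k ≤ s := hs.2.1
  have hents' : ent a β (k+1) ≤ s := hs1.2.1
  have hlen := len_path h hs.1
  have hlen' := len_path h hs1.1
  have c0 : ent a β k < s := by omega
  have c1 : s < ext b α k := by omega
  refine ⟨c0, c1, ?_, ?_, ?_, ?_⟩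
  · unfold row
    rw [show (s - 1 - ent a β k).toNat = l - 1 by omega, h2]
    rfl
  · unfold row
    rw [show (s + 1 - ent a β k).toNat = l + 1 by omega, h3]
    rfl
  · intro hent'
    have hl'0 : 0 < l' := by omega
    unfold row
    rw [show (s - 1 - ent a β (k+1)).toNat = l' - 1 by omega, h4 hl'0]
    rfl
  · intro hext'
    have hl'1 : l' + 1 < (P.getD (k+1) []).length := by omega
    unfold row
    rw [show (s + 1 - ent a β (k+1)).toNat = l' + 1 by omega, h5 hl'1]
    rfl

lemma row_le_succ (h : IsOscTuple a b α β P) {k : ℕ} {s : ℤ}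
    (hs1 : pres a b α β P (k+1) s) : row a β P k s ≤ row a β P (k+1) s := by
  have hk1 : k + 1 < P.length := hs1.1
  have base : ∀ n : ℕ, ent a β (k+1) + n ≤ ext b α (k+1) →
      row a β P k (ent a β (k+1) + n) ≤ row a β P (k+1) (ent a β (k+1) + n) := by
    intro n
    induction n with
    | zero =>
      intro hn
      simp only [Nat.cast_zero, add_zero] at *
      rw [row_ent h hk1]
      have hp : pres a b α β P (k+1) (ent a β (k+1)) := ⟨hk1, le_refl _, hn⟩
      exact (row_bounds h (pres_anti h (Nat.le_succ k) hp)).2.1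
    | succ n ih =>
      intro hn
      have hcast : ((n+1 : ℕ) : ℤ) = (n : ℤ) + 1 := by push_cast; ring
      rw [hcast, ← add_assoc] at *
      set u := ent a β (k+1) + (n : ℤ) with hu
      have hp1 : pres a b α β P (k+1) u := ⟨hk1, by omega, by omega⟩
      have hp1' : pres a b α β P (k+1) (u+1) := ⟨hk1, by omega, by omega⟩
      have hp0 : pres a b α β P k u := pres_anti h (Nat.le_succ k) hp1
      have hp0' : pres a b α β P k (u+1) := pres_anti h (Nat.le_succ k) hp1'
      have ihu := ih (by omega)
      rcases eq_or_lt_of_le ihu with heq | hlt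
      · have hosc := osc_local h hp0 hp1 heq.symm
        rw [hosc.2.2.2.1, hosc.2.2.2.2.2 (by omega)]
        omega
      · have s0 := row_step h hp0 hp0'
        have s1 := row_step h hp1 hp1'
        omega
  have hn : s = ent a β (k+1) + ((s - ent a β (k+1)).toNat : ℤ) := by
    have := hs1.2.1; omega
  have := base (s - ent a β (k+1)).toNat (by rw [← hn]; exact hs1.2.2)
  rwa [← hn] at this

lemma row_le_of_le (h : IsOscTuple a b α β P) {k j : ℕ} {s : ℤ} (hkj : k ≤ j)
    (hs : pres a b α β P j s) : row a β P k s ≤ row a β P j s := by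
  induction j with
  | zero => have : k = 0 := by omega
            subst this; exact le_refl _
  | succ n ih =>
    rcases Nat.eq_or_lt_of_le hkj with rfl | hlt
    · exact le_refl _
    · exact le_trans (ih (by omega) (pres_anti h (Nat.le_succ n) hs)) (row_le_succ h hs)

lemma row_lt_of_lt (h : IsOscTuple a b α β P) {k j : ℕ} {s : ℤ} (hkj : k + 2 ≤ j)
    (hs : pres a b α β P j s) : row a β P k s < row a β P j s := by
  have hp2 : pres a b α β P (k+2) s := pres_anti h hkj hs
  have hp1 : pres a b α β P (k+1) s := pres_anti h (by omega) hs
  have hp0 : pres a b α β P k s := pres_anti h (by omega) hs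
  have l01 : row a β P k s ≤ row a β P (k+1) s := row_le_succ h hp1
  have l12 : row a β P (k+1) s ≤ row a β P (k+2) s := row_le_succ h hp2
  have l2j : row a β P (k+2) s ≤ row a β P j s := row_le_of_le h hkj hs
  rcases eq_or_lt_of_le l01 with e01 | e01
  · rcases eq_or_lt_of_le l12 with e12 | e12
    · exfalso
      have A := osc_local h hp0 hp1 e01.symm
      have B := osc_local h hp1 (show pres a b α β P (k+1+1) s from hp2)
        (show row a β P (k+1+1) s = row a β P (k+1) s from e12.symm)
      have hx := A.2.2.2.2.1 B.1
      have hy := B.2.2.1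
      omega
    · omega
  · omega

end OP14

namespace OP14

variable {a b : ℕ} {α β : Finset ℕ} {P : List (List (ℤ × ℤ))}

/-- the finite set of indices of paths through `v`. -/
def Kf (P : List (List (ℤ × ℤ))) (v : ℤ × ℤ) : Finset ℕ :=
  (Finset.range P.length).filter (fun k => v ∈ P.getD k [])

lemma passCount_eq (v : ℤ × ℤ) : passCount P v = (Kf P v).card := by
  unfold passCount
  rw [← Set.ncard_coe_finset]
  congr 1
  ext k
  simp [Kf, Finset.mem_filter, Finset.mem_range]

lemma mem_Kf (h : IsOscTuple a b α β P) {k : ℕ} {v : ℤ × ℤ} :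
    k ∈ Kf P v ↔ pres a b α β P k (v.2 - v.1) ∧ row a β P k (v.2 - v.1) = v.1 := by
  simp only [Kf, Finset.mem_filter, Finset.mem_range]
  constructor
  · rintro ⟨hk, hv⟩
    exact (mem_path_iff h hk v).mp hv
  · rintro ⟨hp, hr⟩
    exact ⟨hp.1, (mem_path_iff h hp.1 v).mpr ⟨hp, hr⟩⟩

lemma three_nat {x y z : ℕ} (hxy : x ≠ y) (hxz : x ≠ z) (hyz : y ≠ z) :
    ∃ i j, (i = x ∨ i = y ∨ i = z) ∧ (j = x ∨ j = y ∨ j = z) ∧ i + 2 ≤ j := by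
  refine ⟨min x (min y z), max x (max y z), ?_, ?_, ?_⟩ <;> omega

lemma Kf_card_le_two (h : IsOscTuple a b α β P) (v : ℤ × ℤ) :
    (Kf P v).card ≤ 2 := by
  by_contra hc
  push_neg at hc
  rw [Finset.two_lt_card] at hc
  obtain ⟨x, hx, y, hy, z, hz, hxy, hxz, hyz⟩ := hc
  obtain ⟨i, j, hi, hj, hij⟩ := three_nat hxy hxz hyz
  have hiK : i ∈ Kf P v := by rcases hi with rfl | rfl | rfl <;> assumption
  have hjK : j ∈ Kf P v := by rcases hj with rfl | rfl | rfl <;> assumption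
  rw [mem_Kf h] at hiK hjK
  have := row_lt_of_lt h hij hjK.1
  omega

lemma count_split (v : ℤ × ℤ) (k : ℕ) (htop : ∀ j, k < j → j ∉ Kf P v) :
    (Kf P v).card =
      ((Kf P v).filter (· < k)).card + (if k ∈ Kf P v then 1 else 0) := by
  classical
  have hsplit : Kf P v = (Kf P v).filter (· < k) ∪ (Kf P v).filter (· = k) := by
    ext j
    simp only [Finset.mem_union, Finset.mem_filter]
    constructor
    · intro hj
      rcases Nat.lt_trichotomy j k with hc | hc | hc
      · exact Or.inl ⟨hj, hc⟩
      · exact Or.inr ⟨hj, hc⟩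
      · exact absurd hj (htop j hc)
    · rintro (⟨hj, _⟩ | ⟨hj, _⟩) <;> exact hj
  have hdisj : Disjoint ((Kf P v).filter (· < k)) ((Kf P v).filter (· = k)) := by
    rw [Finset.disjoint_filter]
    intro j _ hj
    omega
  rw [show ((Kf P v).filter (· < k)).card + (if k ∈ Kf P v then 1 else 0) =
      ((Kf P v).filter (· < k)).card + ((Kf P v).filter (· = k)).card by
    congr 1
    rw [Finset.filter_eq' (Kf P v) k]
    split <;> simp]
  rw [← Finset.card_union_of_disjoint hdisj, ← hsplit]

lemma mem_Zset_iff {v : ℤ × ℤ} (hv : v ∈ rectZ a b) :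
    v ∈ Zset a b P ↔ (passCount P v = 0 ∨ passCount P v = 2) := by
  simp [Zset, hv]

lemma count_one_iff {α' β' : Finset ℕ} {P' : List (List (ℤ × ℤ))}
    (h : IsOscTuple a b α β P) (h' : IsOscTuple a b α' β' P')
    (hZ : Zset a b P = Zset a b P') {v : ℤ × ℤ} (hv : v ∈ rectZ a b) :
    ((Kf P v).card = 1 ↔ (Kf P' v).card = 1) := by
  have h2 := Kf_card_le_two h v
  have h2' := Kf_card_le_two h' v
  have hmem : v ∈ Zset a b P ↔ v ∈ Zset a b P' := by rw [hZ]
  rw [mem_Zset_iff hv, mem_Zset_iff hv, passCount_eq, passCount_eq] at hmem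
  rcases hmem with ⟨hf, hg⟩
  constructor <;> intro h1
  · by_contra hc
    have := hg (by omega)
    omega
  · by_contra hc
    have := hf (by omega)
    omega

lemma key_parity {α' β' : Finset ℕ} {P' : List (List (ℤ × ℤ))}
    (h : IsOscTuple a b α β P) (h' : IsOscTuple a b α' β' P')
    (hZ : Zset a b P = Zset a b P') {v : ℤ × ℤ} (hv : v ∈ rectZ a b) (k : ℕ)
    (htop : ∀ j, k < j → j ∉ Kf P v) (htop' : ∀ j, k < j → j ∉ Kf P' v)
    (hlow : ∀ j, j < k → (j ∈ Kf P v ↔ j ∈ Kf P' v)) :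
    (k ∈ Kf P v ↔ k ∈ Kf P' v) := by
  classical
  have c := count_split v k htop
  have c' := count_split v k htop'
  have hfil : ((Kf P v).filter (· < k)) = ((Kf P' v).filter (· < k)) := by
    ext j
    simp only [Finset.mem_filter]
    constructor <;> rintro ⟨hj, hjk⟩
    · exact ⟨(hlow j hjk).mp hj, hjk⟩
    · exact ⟨(hlow j hjk).mpr hj, hjk⟩
  have h2 := Kf_card_le_two h v
  have h2' := Kf_card_le_two h' v
  have hone := count_one_iff h h' hZ hv
  rw [hfil] at c
  set A := ((Kf P' v).filter (· < k)).card with hA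
  by_cases hm : k ∈ Kf P v <;> by_cases hm' : k ∈ Kf P' v <;>
    simp only [hm, hm', if_true, if_false, iff_true, iff_false, if_pos, if_neg,
      not_false_iff, not_true] at c c' ⊢
  · exfalso
    have hA2 : A ≤ 2 := by omega
    interval_cases A
    · have := hone.mp (by omega); omega
    · have := hone.mpr (by omega); omega
    · omega
  · exfalso
    have hA2 : A ≤ 2 := by omega
    interval_cases A
    · have := hone.mpr (by omega); omega
    · have := hone.mp (by omega); omega
    · omega

end OP14

namespace OP14

variable {a b : ℕ} {α β : Finset ℕ} {P : List (List (ℤ × ℤ))}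

lemma pres_enter (h : IsOscTuple a b α β P) {k : ℕ} {s : ℤ}
    (hp1 : pres a b α β P k (s+1)) (hp0 : ¬ pres a b α β P k s) :
    ent a β k = s + 1 ∧ row a β P k (s+1) = (a : ℤ) := by
  have h1 := hp1.2.1
  have h2 := hp1.2.2
  have hent : ent a β k = s + 1 := by
    by_contra hc
    exact hp0 ⟨hp1.1, by omega, by omega⟩
  refine ⟨hent, ?_⟩
  rw [← hent, row_ent h hp1.1]

lemma col_exit (h : IsOscTuple a b α β P) {k : ℕ} {s : ℤ}
    (hs : pres a b α β P k s) (he : s = ext b α k) :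
    row a β P k s + s = b := by
  subst he
  rw [row_ext h hs.1]
  unfold ext
  omega

lemma pres_succ_of_col_lt (h : IsOscTuple a b α β P) {k : ℕ} {s : ℤ}
    (hs : pres a b α β P k s) (hcol : row a β P k s + s < b) :
    pres a b α β P k (s+1) := by
  refine ⟨hs.1, by have := hs.2.1; omega, ?_⟩
  rcases eq_or_lt_of_le hs.2.2 with he | he
  · have := col_exit h hs he
    omega
  · omega

/-- if present at `s+1` with the same row, the column stays `≤ b`. -/
lemma col_succ_le (h : IsOscTuple a b α β P) {k : ℕ} {s : ℤ}
    (hs : pres a b α β P k (s+1)) : row a β P k (s+1) + s + 1 ≤ b := by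
  have := (row_bounds h hs).2.2.2
  omega

end OP14

namespace OP14

variable {a b : ℕ} {α β : Finset ℕ} {P : List (List (ℤ × ℤ))}

lemma mem_Kf_at (h : IsOscTuple a b α β P) {j : ℕ} {s ρ : ℤ} {v : ℤ × ℤ}
    (hv1 : v.1 = ρ) (hd : v.2 - v.1 = s) :
    (j ∈ Kf P v ↔ pres a b α β P j s ∧ row a β P j s = ρ) := by
  rw [mem_Kf h, hd, hv1]

end OP14

namespace OP14

variable {a b : ℕ}

lemma main_step {α β α' β' : Finset ℕ} {P P' : List (List (ℤ × ℤ))} (ha : 0 < a)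
    (h : IsOscTuple a b α β P) (h' : IsOscTuple a b α' β' P')
    (hZ : Zset a b P = Zset a b P') (s : ℤ)
    (ih : ∀ j, (pres a b α β P j s ↔ pres a b α' β' P' j s) ∧
          (pres a b α β P j s → row a β P j s = row a β' P' j s)) :
    ∀ k, (pres a b α β P k (s+1) ↔ pres a b α' β' P' k (s+1)) ∧
          (pres a b α β P k (s+1) → row a β P k (s+1) = row a β' P' k (s+1)) := by
  intro k
  induction k using Nat.strong_induction_on with
  | _ k IH =>
  by_cases hpk : pres a b α β P k s
  · -- path k is present on diagonal s
    have hpk' : pres a b α' β' P' k s := (ih k).1.mp hpk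
    have hreq : row a β P k s = row a β' P' k s := (ih k).2 hpk
    by_cases hb : pres a b α β P (k+1) s ∧ row a β P (k+1) s = row a β P k s
    · -- (a) osculation below: forced north
      have hb1' : pres a b α' β' P' (k+1) s := (ih (k+1)).1.mp hb.1
      have hb2' : row a β' P' (k+1) s = row a β' P' k s := by
        have h1 := (ih (k+1)).2 hb.1
        have h2 := hb.2
        omega
      have A := osc_local h hpk hb.1 hb.2
      have A' := osc_local h' hpk' hb1' hb2'
      have hp1 : pres a b α β P k (s+1) :=
        ⟨hpk.1, by have := hpk.2.1; omega, by have := A.2.1; omega⟩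
      have hp1' : pres a b α' β' P' k (s+1) :=
        ⟨hpk'.1, by have := hpk'.2.1; omega, by have := A'.2.1; omega⟩
      refine ⟨iff_of_true hp1 hp1', fun _ => ?_⟩
      have e1 := A.2.2.2.1
      have e2 := A'.2.2.2.1
      omega
    · by_cases hab : 0 < k ∧ pres a b α β P (k-1) s ∧ row a β P (k-1) s = row a β P k s
      · -- (b) osculation above: forced east or exit
        obtain ⟨j, rfl⟩ : ∃ j, k = j + 1 := ⟨k - 1, by omega⟩
        have hjp : pres a b α β P j s := by have := hab.2.1; simpa using this
        have hjr : row a β P j s = row a β P (j+1) s := by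
          have := hab.2.2; simpa using this
        have B := osc_local h hjp hpk hjr.symm
        have hjp' : pres a b α' β' P' j s := (ih j).1.mp hjp
        have hjreq : row a β P j s = row a β' P' j s := (ih j).2 hjp
        have hjr' : row a β' P' j s = row a β' P' (j+1) s := by omega
        have B' := osc_local h' hjp' hpk' hjr'.symm
        by_cases hcol : row a β P (j+1) s + s = b
        · -- exit (column b, forced east impossible)
          have hnp : ¬ pres a b α β P (j+1) (s+1) := by
            intro hp1
            have heast := B.2.2.2.2.2 (by have := hp1.2.2; omega)
            have hcb := col_succ_le h hp1
            omega
          have hnp' : ¬ pres a b α' β' P' (j+1) (s+1) := by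
            intro hp1
            have heast := B'.2.2.2.2.2 (by have := hp1.2.2; omega)
            have hcb := col_succ_le h' hp1
            omega
          exact ⟨iff_of_false hnp hnp', fun hp => absurd hp hnp⟩
        · -- east
          have hcolle := (row_bounds h hpk).2.2.2
          have hp1 : pres a b α β P (j+1) (s+1) :=
            pres_succ_of_col_lt h hpk (by omega)
          have heast := B.2.2.2.2.2 (by have := hp1.2.2; omega)
          have hp1' : pres a b α' β' P' (j+1) (s+1) :=
            pres_succ_of_col_lt h' hpk' (by omega)
          have heast' := B'.2.2.2.2.2 (by have := hp1'.2.2; omega)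
          exact ⟨iff_of_true hp1 hp1', fun _ => by omega⟩
      · -- (c) no osculation at (k,s): use the parity of Z on diagonal s+1
        have hb' : ¬ (pres a b α' β' P' (k+1) s ∧
            row a β' P' (k+1) s = row a β' P' k s) := by
          rintro ⟨hp, hr⟩
          have hp0 : pres a b α β P (k+1) s := (ih (k+1)).1.mpr hp
          have := (ih (k+1)).2 hp0
          exact hb ⟨hp0, by omega⟩
        have hrge : 1 ≤ row a β P k s :=
          le_trans (αZ_bounds h hpk.1).1 (row_bounds h hpk).1
        have hcle : row a β P k s + s ≤ b := (row_bounds h hpk).2.2.2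
        have hra : row a β P k s ≤ a := (row_bounds h hpk).2.1
        have hcge : 1 ≤ row a β P k s + s :=
          le_trans (βZ_bounds h hpk.1).1 (row_bounds h hpk).2.2.1
        by_cases hr2 : 2 ≤ row a β P k s
        · -- parity at the point one row up on diagonal s+1
          have hvrect : ((row a β P k s - 1, row a β P k s + s) : ℤ × ℤ) ∈ rectZ a b := by
            simp only [rectZ, Set.mem_setOf_eq]
            refine ⟨by omega, by omega, by omega, by omega⟩
          have hmemv : ∀ j, j ∈ Kf P ((row a β P k s - 1, row a β P k s + s) : ℤ × ℤ) ↔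
              pres a b α β P j (s+1) ∧ row a β P j (s+1) = row a β P k s - 1 :=
            fun j => mem_Kf_at h rfl
              (by show (row a β P k s + s) - (row a β P k s - 1) = s + 1; ring)
          have hmemv' : ∀ j, j ∈ Kf P' ((row a β P k s - 1, row a β P k s + s) : ℤ × ℤ) ↔
              pres a b α' β' P' j (s+1) ∧ row a β' P' j (s+1) = row a β P k s - 1 :=
            fun j => mem_Kf_at h' rfl
              (by show (row a β P k s + s) - (row a β P k s - 1) = s + 1; ring)
          have htop : ∀ j, k < j →
              j ∉ Kf P ((row a β P k s - 1, row a β P k s + s) : ℤ × ℤ) := by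
            intro j hkj hjK
            rw [hmemv j] at hjK
            obtain ⟨hpj1, hrj⟩ := hjK
            by_cases hjs : pres a b α β P j s
            · have hk1 : pres a b α β P (k+1) s := pres_anti h (by omega) hjs
              have h1 : row a β P k s ≤ row a β P (k+1) s := row_le_succ h hk1
              have h2 : row a β P (k+1) s ≤ row a β P j s := row_le_of_le h (by omega) hjs
              have h3 : row a β P (k+1) s ≠ row a β P k s := fun hEq => hb ⟨hk1, hEq⟩
              rcases row_step h hjs hpj1 with h4 | h4 <;> omega
            · have hent := pres_enter h hpj1 hjs
              have := hent.2
              omega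
          have htop' : ∀ j, k < j →
              j ∉ Kf P' ((row a β P k s - 1, row a β P k s + s) : ℤ × ℤ) := by
            intro j hkj hjK
            rw [hmemv' j] at hjK
            obtain ⟨hpj1, hrj⟩ := hjK
            have hra' : row a β' P' k s ≤ a := (row_bounds h' hpk').2.1
            by_cases hjs : pres a b α' β' P' j s
            · have hk1 : pres a b α' β' P' (k+1) s := pres_anti h' (by omega) hjs
              have h1 : row a β' P' k s ≤ row a β' P' (k+1) s := row_le_succ h' hk1
              have h2 : row a β' P' (k+1) s ≤ row a β' P' j s :=
                row_le_of_le h' (by omega) hjs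
              have h3 : row a β' P' (k+1) s ≠ row a β' P' k s := fun hEq => hb' ⟨hk1, hEq⟩
              rcases row_step h' hjs hpj1 with h4 | h4 <;> omega
            · have hent := pres_enter h' hpj1 hjs
              have := hent.2
              omega
          have hlow : ∀ j, j < k →
              (j ∈ Kf P ((row a β P k s - 1, row a β P k s + s) : ℤ × ℤ) ↔
               j ∈ Kf P' ((row a β P k s - 1, row a β P k s + s) : ℤ × ℤ)) := by
            intro j hjk
            rw [hmemv j, hmemv' j]
            have hIH := IH j hjk
            constructor
            · rintro ⟨hp, hr⟩
              exact ⟨hIH.1.mp hp, by have := hIH.2 hp; omega⟩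
            · rintro ⟨hp, hr⟩
              have hp0 := hIH.1.mpr hp
              exact ⟨hp0, by have := hIH.2 hp0; omega⟩
          have hkey := key_parity h h' hZ hvrect k htop htop' hlow
          rw [hmemv k, hmemv' k] at hkey
          by_cases hx : pres a b α β P k (s+1) ∧
              row a β P k (s+1) = row a β P k s - 1
          · have hx' := hkey.mp hx
            exact ⟨iff_of_true hx.1 hx'.1, fun _ => by
              have := hx.2; have := hx'.2; omega⟩
          · have hx' : ¬ (pres a b α' β' P' k (s+1) ∧
                row a β' P' k (s+1) = row a β P k s - 1) := fun hc => hx (hkey.mpr hc)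
            by_cases hcol : row a β P k s + s = b
            · -- at column b and not going north: exits
              have hnp : ¬ pres a b α β P k (s+1) := by
                intro hp1
                rcases row_step h hpk hp1 with h4 | h4
                · have := col_succ_le h hp1; omega
                · exact hx ⟨hp1, h4⟩
              have hnp' : ¬ pres a b α' β' P' k (s+1) := by
                intro hp1
                rcases row_step h' hpk' hp1 with h4 | h4
                · have := col_succ_le h' hp1; omega
                · exact hx' ⟨hp1, by omega⟩
              exact ⟨iff_of_false hnp hnp', fun hp => absurd hp hnp⟩
            · -- east in both
              have hp1 : pres a b α β P k (s+1) :=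
                pres_succ_of_col_lt h hpk (by omega)
              have hp1' : pres a b α' β' P' k (s+1) :=
                pres_succ_of_col_lt h' hpk' (by omega)
              refine ⟨iff_of_true hp1 hp1', fun _ => ?_⟩
              rcases row_step h hpk hp1 with h4 | h4
              · rcases row_step h' hpk' hp1' with h5 | h5
                · omega
                · exact absurd ⟨hp1', by omega⟩ hx'
              · exact absurd ⟨hp1, h4⟩ hx
        · -- row 1: cannot go north
          have hr1 : row a β P k s = 1 := by omega
          have hrow1 : pres a b α β P k (s+1) → row a β P k (s+1) = row a β P k s := by
            intro hp1
            have hlb := le_trans (αZ_bounds h hpk.1).1 (row_bounds h hp1).1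
            rcases row_step h hpk hp1 with h4 | h4 <;> omega
          have hrow1' : pres a b α' β' P' k (s+1) →
              row a β' P' k (s+1) = row a β' P' k s := by
            intro hp1
            have hlb := le_trans (αZ_bounds h' hpk'.1).1 (row_bounds h' hp1).1
            rcases row_step h' hpk' hp1 with h4 | h4 <;> omega
          by_cases hcol : row a β P k s + s = b
          · have hnp : ¬ pres a b α β P k (s+1) := by
              intro hp1
              have := col_succ_le h hp1
              have := hrow1 hp1
              omega
            have hnp' : ¬ pres a b α' β' P' k (s+1) := by
              intro hp1
              have := col_succ_le h' hp1
              have := hrow1' hp1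
              omega
            exact ⟨iff_of_false hnp hnp', fun hp => absurd hp hnp⟩
          · have hp1 : pres a b α β P k (s+1) :=
              pres_succ_of_col_lt h hpk (by omega)
            have hp1' : pres a b α' β' P' k (s+1) :=
              pres_succ_of_col_lt h' hpk' (by omega)
            refine ⟨iff_of_true hp1 hp1', fun _ => ?_⟩
            have := hrow1 hp1
            have := hrow1' hp1'
            omega
  · -- path k not present on diagonal s: entering or absent
    have hpk' : ¬ pres a b α' β' P' k s := fun hc => hpk ((ih k).1.mpr hc)
    by_cases hcol : 1 ≤ (a:ℤ) + s + 1 ∧ (a:ℤ) + s + 1 ≤ (b:ℤ)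
    · have hvrect : (((a:ℤ), (a:ℤ) + s + 1) : ℤ × ℤ) ∈ rectZ a b := by
        simp only [rectZ, Set.mem_setOf_eq]
        have : (1:ℤ) ≤ a := by exact_mod_cast ha
        exact ⟨this, le_refl _, hcol.1, hcol.2⟩
      have hmemv : ∀ j, j ∈ Kf P (((a:ℤ), (a:ℤ) + s + 1) : ℤ × ℤ) ↔
          pres a b α β P j (s+1) ∧ row a β P j (s+1) = (a:ℤ) :=
        fun j => mem_Kf_at h rfl (by show ((a:ℤ) + s + 1) - a = s + 1; ring)
      have hmemv' : ∀ j, j ∈ Kf P' (((a:ℤ), (a:ℤ) + s + 1) : ℤ × ℤ) ↔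
          pres a b α' β' P' j (s+1) ∧ row a β' P' j (s+1) = (a:ℤ) :=
        fun j => mem_Kf_at h' rfl (by show ((a:ℤ) + s + 1) - a = s + 1; ring)
      have htop : ∀ j, k < j → j ∉ Kf P (((a:ℤ), (a:ℤ) + s + 1) : ℤ × ℤ) := by
        intro j hkj hjK
        rw [hmemv j] at hjK
        obtain ⟨hpj1, _⟩ := hjK
        by_cases hjs : pres a b α β P j s
        · exact hpk (pres_anti h (by omega) hjs)
        · have hent := (pres_enter h hpj1 hjs).1
          have h1 := ent_lt_ent h hkj hpj1.1
          have h2 := ext_lt_ext h hkj hpj1.1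
          have h3 := hpj1.2.2
          have h4 := hpj1.1
          have h5 := hpj1.2.1
          exact hpk ⟨by omega, by omega, by omega⟩
      have htop' : ∀ j, k < j → j ∉ Kf P' (((a:ℤ), (a:ℤ) + s + 1) : ℤ × ℤ) := by
        intro j hkj hjK
        rw [hmemv' j] at hjK
        obtain ⟨hpj1, _⟩ := hjK
        by_cases hjs : pres a b α' β' P' j s
        · exact hpk' (pres_anti h' (by omega) hjs)
        · have hent := (pres_enter h' hpj1 hjs).1
          have h1 := ent_lt_ent h' hkj hpj1.1
          have h2 := ext_lt_ext h' hkj hpj1.1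
          have h3 := hpj1.2.2
          have h4 := hpj1.1
          have h5 := hpj1.2.1
          exact hpk' ⟨by omega, by omega, by omega⟩
      have hlow : ∀ j, j < k →
          (j ∈ Kf P (((a:ℤ), (a:ℤ) + s + 1) : ℤ × ℤ) ↔
           j ∈ Kf P' (((a:ℤ), (a:ℤ) + s + 1) : ℤ × ℤ)) := by
        intro j hjk
        rw [hmemv j, hmemv' j]
        have hIH := IH j hjk
        constructor
        · rintro ⟨hp, hr⟩
          exact ⟨hIH.1.mp hp, by have := hIH.2 hp; omega⟩
        · rintro ⟨hp, hr⟩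
          have hp0 := hIH.1.mpr hp
          exact ⟨hp0, by have := hIH.2 hp0; omega⟩
      have hkey := key_parity h h' hZ hvrect k htop htop' hlow
      rw [hmemv k, hmemv' k] at hkey
      have hiff1 : pres a b α β P k (s+1) ↔
          (pres a b α β P k (s+1) ∧ row a β P k (s+1) = (a:ℤ)) :=
        ⟨fun hp => ⟨hp, (pres_enter h hp hpk).2⟩, fun hp => hp.1⟩
      have hiff1' : pres a b α' β' P' k (s+1) ↔
          (pres a b α' β' P' k (s+1) ∧ row a β' P' k (s+1) = (a:ℤ)) :=
        ⟨fun hp => ⟨hp, (pres_enter h' hp hpk').2⟩, fun hp => hp.1⟩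
      refine ⟨hiff1.trans (hkey.trans hiff1'.symm), fun hp => ?_⟩
      have e1 := (pres_enter h hp hpk).2
      have e2 := (pres_enter h' ((hiff1.trans (hkey.trans hiff1'.symm)).mp hp) hpk').2
      omega
    · have hnp : ¬ pres a b α β P k (s+1) := by
        intro hp1
        have hent := (pres_enter h hp1 hpk).1
        have hβ := βZ_bounds h hp1.1
        unfold ent at hent
        omega
      have hnp' : ¬ pres a b α' β' P' k (s+1) := by
        intro hp1
        have hent := (pres_enter h' hp1 hpk').1
        have hβ := βZ_bounds h' hp1.1
        unfold ent at hent
        omega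
      exact ⟨iff_of_false hnp hnp', fun hp => absurd hp hnp⟩

end OP14

namespace OP14

variable {a b : ℕ} {α β : Finset ℕ} {P : List (List (ℤ × ℤ))}

lemma not_pres_low (h : IsOscTuple a b α β P) {k : ℕ} {s : ℤ}
    (hs : s < 1 - (a:ℤ)) : ¬ pres a b α β P k s := by
  intro hp
  have h1 := βZ_bounds h hp.1
  have h2 := hp.2.1
  unfold ent at h2
  omega

lemma eq_at {α' β' : Finset ℕ} {P' : List (List (ℤ × ℤ))} (ha : 0 < a)
    (h : IsOscTuple a b α β P) (h' : IsOscTuple a b α' β' P')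
    (hZ : Zset a b P = Zset a b P') :
    ∀ (s : ℤ) (k : ℕ), (pres a b α β P k s ↔ pres a b α' β' P' k s) ∧
      (pres a b α β P k s → row a β P k s = row a β' P' k s) := by
  have main : ∀ n : ℕ, ∀ k, (pres a b α β P k (-(a:ℤ) + n) ↔
      pres a b α' β' P' k (-(a:ℤ) + n)) ∧
      (pres a b α β P k (-(a:ℤ) + n) →
        row a β P k (-(a:ℤ) + n) = row a β' P' k (-(a:ℤ) + n)) := by
    intro n
    induction n with
    | zero =>
      intro k
      have hn : (-(a:ℤ) + (0:ℕ)) < 1 - (a:ℤ) := by simp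
      exact ⟨iff_of_false (not_pres_low h hn) (not_pres_low h' hn),
        fun hp => absurd hp (not_pres_low h hn)⟩
    | succ n ihn =>
      have hstep := main_step ha h h' hZ (-(a:ℤ) + n) ihn
      intro k
      have hcast : (-(a:ℤ) + ((n+1:ℕ):ℤ)) = (-(a:ℤ) + n) + 1 := by push_cast; ring
      rw [hcast]
      exact hstep k
  intro s k
  rcases lt_or_ge s (1 - (a:ℤ)) with hs | hs
  · exact ⟨iff_of_false (not_pres_low h hs) (not_pres_low h' hs),
      fun hp => absurd hp (not_pres_low h hs)⟩
  · have hrw : s = -(a:ℤ) + ((s + (a:ℤ)).toNat : ℤ) := by omega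
    rw [hrw]
    exact main _ k

theorem main_thm (ha : 0 < a) {α' β' : Finset ℕ} {P' : List (List (ℤ × ℤ))}
    (h : IsOscTuple a b α β P) (h' : IsOscTuple a b α' β' P')
    (hZ : Zset a b P = Zset a b P') : P = P' := by
  have E := eq_at ha h h' hZ
  have hlen1 : ∀ k, k < P.length → k < P'.length := by
    intro k hk
    have hp : pres a b α β P k (ent a β k) := ⟨hk, le_refl _, ent_le_ext h hk⟩
    exact ((E _ k).1.mp hp).1
  have hlen2 : ∀ k, k < P'.length → k < P.length := by
    intro k hk
    have hp : pres a b α' β' P' k (ent a β' k) := ⟨hk, le_refl _, ent_le_ext h' hk⟩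
    exact ((E _ k).1.mpr hp).1
  have hlen : P.length = P'.length := by
    rcases Nat.eq_zero_or_pos P.length with h0 | h0
    · rcases Nat.eq_zero_or_pos P'.length with h0' | h0'
      · omega
      · have := hlen2 (P'.length - 1) (by omega); omega
    · have := hlen1 (P.length - 1) (by omega)
      rcases Nat.eq_zero_or_pos P'.length with h0' | h0'
      · omega
      · have := hlen2 (P'.length - 1) (by omega); omega
  have hent : ∀ k, k < P.length → ent a β k = ent a β' k := by
    intro k hk
    have hp : pres a b α β P k (ent a β k) := ⟨hk, le_refl _, ent_le_ext h hk⟩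
    have h1 := ((E _ k).1.mp hp).2.1
    have hp' : pres a b α' β' P' k (ent a β' k) :=
      ⟨by omega, le_refl _, ent_le_ext h' (by omega)⟩
    have h2 := ((E _ k).1.mpr hp').2.1
    omega
  have hext : ∀ k, k < P.length → ext b α k = ext b α' k := by
    intro k hk
    have hp : pres a b α β P k (ext b α k) := ⟨hk, ent_le_ext h hk, le_refl _⟩
    have h1 := ((E _ k).1.mp hp).2.2
    have hp' : pres a b α' β' P' k (ext b α' k) :=
      ⟨by omega, ent_le_ext h' (by omega), le_refl _⟩
    have h2 := ((E _ k).1.mpr hp').2.2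
    omega
  have hplen : ∀ k, k < P.length → (P.getD k []).length = (P'.getD k []).length := by
    intro k hk
    have h1 := len_path h hk
    have h2 := len_path h' (by omega : k < P'.length)
    rw [← hent k hk, ← hext k hk] at h2
    omega
  apply List.ext_getElem hlen
  intro k hk hk'
  have hkk : k < P.length := hk
  rw [← List.getD_eq_getElem P [] hk, ← List.getD_eq_getElem P' [] hk']
  apply List.ext_getElem (hplen k hkk)
  intro l hl hl'
  have hsl : pres a b α β P k (ent a β k + l) := by
    refine ⟨hkk, by omega, ?_⟩
    have h1 := len_path h hkk
    omega
  have hsl' : pres a b α' β' P' k (ent a β k + l) := (E _ k).1.mp hsl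
  have hrow := (E _ k).2 hsl
  have e1 := point_eq h hsl
  have e2 := point_eq h' hsl'
  rw [show (ent a β k + (l:ℤ) - ent a β k).toNat = l by omega] at e1
  rw [show (ent a β k + (l:ℤ) - ent a β' k).toNat = l by
    have := hent k hkk; omega] at e2
  rw [← List.getD_eq_getElem _ (0,0) hl, ← List.getD_eq_getElem _ (0,0) hl', e1, e2, hrow]

end OP14


/-- A tuple of osculating paths is uniquely determined by its vacancy-osculation set. -/
theorem statement14 (a b : ℕ) (ha : 0 < a) (hb : 0 < b)
    (α β α' β' : Finset ℕ) (P P' : List (List (ℤ × ℤ)))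
    (h : IsOscTuple a b α β P) (h' : IsOscTuple a b α' β' P')
    (hZ : Zset a b P = Zset a b P') : P = P' :=
  OP14.main_thm ha h h' hZ
end
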